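/- arXiv:1905.13476 — 8 statements merged into one kernel-verified Lean document; each statement's English description precedes it below -/
import Mathlib

section
/- Let A and B be real symmetric positive semidefinite n×n matrices. Then det(I + A) ≤ det(I + B) · exp( tr( (A − B)(I + B)⁻¹ ) ). -/
open Matrix

lemma trace_eq_sum_eigenvalues_aux {n : ℕ} {M : Matrix (Fin n) (Fin n) ℝ}
    (hM : M.IsHermitian) : M.trace = ∑ i, hM.eigenvalues i := by
  conv_lhs => rw [hM.spectral_theorem, Unitary.conjStarAlgAut_apply]
  rw [trace_mul_cycle]
  have h1 : (star (hM.eigenvectorUnitary : Matrix (Fin n) (Fin n) ℝ)) *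
      (hM.eigenvectorUnitary : Matrix (Fin n) (Fin n) ℝ) = 1 :=
    Matrix.mem_unitaryGroup_iff'.mp hM.eigenvectorUnitary.2
  rw [h1, one_mul, trace_diagonal]
  simp

lemma det_le_exp_trace_aux {n : ℕ} {M : Matrix (Fin n) (Fin n) ℝ} (hM : M.PosSemidef) :
    M.det ≤ Real.exp (M.trace - n) := by
  rw [hM.1.det_eq_prod_eigenvalues, trace_eq_sum_eigenvalues_aux hM.1]
  calc ∏ i, (hM.1.eigenvalues i : ℝ)
      ≤ ∏ i, Real.exp (hM.1.eigenvalues i - 1) := by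
        apply Finset.prod_le_prod (fun i _ => by simpa using hM.eigenvalues_nonneg i)
        intro i _
        have := Real.add_one_le_exp (hM.1.eigenvalues i - 1)
        linarith
    _ = Real.exp (∑ i, (hM.1.eigenvalues i - 1)) := by rw [Real.exp_sum]
    _ = Real.exp ((∑ i, hM.1.eigenvalues i) - n) := by
        rw [Finset.sum_sub_distrib]
        simp

/-- For real symmetric psd matrices `A` and `B`,
`det (1 + A) ≤ det (1 + B) * exp (tr ((A - B) * (1 + B)⁻¹))`. -/
theorem det_one_add_le_det_mul_exp_trace {n : ℕ} (A B : Matrix (Fin n) (Fin n) ℝ)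
    (hA : A.PosSemidef) (hB : B.PosSemidef) :
    (1 + A).det ≤ (1 + B).det * Real.exp (((A - B) * (1 + B)⁻¹).trace) := by
  set C : Matrix (Fin n) (Fin n) ℝ := 1 + B with hCdef
  have hC : C.PosDef := Matrix.PosDef.one.add_posSemidef hB
  have hA1 : (1 + A).PosSemidef := (Matrix.PosDef.one.add_posSemidef hA).posSemidef
  have hCinv : C⁻¹.PosDef := hC.inv
  set S : Matrix (Fin n) (Fin n) ℝ := open MatrixOrder in CFC.sqrt C⁻¹ with hSdef
  have hS : S.PosSemidef := open MatrixOrder in (CFC.sqrt_nonneg C⁻¹).posSemidef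
  have hSS : S * S = C⁻¹ := open MatrixOrder in CFC.sqrt_mul_sqrt_self C⁻¹ hCinv.posSemidef.nonneg
  have hSH : Sᴴ = S := hS.1
  have hM : (S * (1 + A) * S).PosSemidef := by
    have := hA1.mul_mul_conjTranspose_same S
    rwa [hSH] at this
  have hdetM : (S * (1 + A) * S).det = C⁻¹.det * (1 + A).det := by
    rw [det_mul, det_mul, ← hSS, det_mul]
    ring
  have htrM : (S * (1 + A) * S).trace = ((1 + A) * C⁻¹).trace := by
    rw [trace_mul_cycle, hSS, trace_mul_comm]
  have hCC : C * C⁻¹ = 1 := mul_nonsing_inv C hC.det_pos.ne'.isUnit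
  have htr : ((A - B) * C⁻¹).trace = ((1 + A) * C⁻¹).trace - n := by
    have : (A - B) * C⁻¹ = (1 + A) * C⁻¹ - C * C⁻¹ := by
      rw [hCdef]; noncomm_ring
    rw [this, hCC, trace_sub, trace_one]
    simp
  have key := det_le_exp_trace_aux hM
  rw [hdetM, htrM] at key
  have hdetCinv : C⁻¹.det = (C.det)⁻¹ := by
    simp [Matrix.det_nonsing_inv, Ring.inverse_eq_inv']
  rw [htr]
  have hCpos : 0 < C.det := hC.det_pos
  rw [hdetCinv] at key
  have := mul_le_mul_of_nonneg_left key hCpos.le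
  rw [mul_inv_cancel_left₀ hCpos.ne'] at this
  calc (1 + A).det ≤ C.det * Real.exp (((1 + A) * C⁻¹).trace - ↑n) := this
    _ = C.det * Real.exp (((1 + A) * C⁻¹).trace - ↑n) := rfl
end

section
/- Let L = B Bᵀ be a real positive semidefinite n×n matrix and let L̂ = B P Bᵀ where P is a real symmetric idempotent matrix. Then det(I + L) / det(I + L̂) ≥ exp( tr(L(I + L)⁻¹) − tr(L̂) + tr( L̂ (I + L)⁻¹ L̂ ) ). -/
open Matrix

lemma herm_trace_eq_sum {m : ℕ} {A : Matrix (Fin m) (Fin m) ℝ} (hA : A.IsHermitian) :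
    A.trace = ∑ i, hA.eigenvalues i := by
  conv_lhs => rw [hA.spectral_theorem]
  rw [Unitary.conjStarAlgAut_apply, trace_mul_comm, ← Matrix.mul_assoc,
    (Matrix.mem_unitaryGroup_iff').mp hA.eigenvectorUnitary.2, one_mul, trace_diagonal]
  simp

lemma det_le_exp_trace {m : ℕ} {A : Matrix (Fin m) (Fin m) ℝ} (hA : A.PosSemidef) :
    A.det ≤ Real.exp (A.trace - m) := by
  rw [hA.1.det_eq_prod_eigenvalues, herm_trace_eq_sum hA.1]
  calc (∏ i, (hA.1.eigenvalues i : ℝ)) ≤ ∏ i, Real.exp (hA.1.eigenvalues i - 1) := by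
        apply Finset.prod_le_prod
        · intro i _; exact hA.eigenvalues_nonneg i
        · intro i _; linarith [Real.add_one_le_exp (hA.1.eigenvalues i - 1)]
    _ = Real.exp (∑ i, (hA.1.eigenvalues i - 1)) := by rw [Real.exp_sum]
    _ = Real.exp (∑ i, hA.1.eigenvalues i - m) := by
        rw [Finset.sum_sub_distrib]; simp

lemma trace_mul_transpose_nonneg {m : ℕ} (Y : Matrix (Fin m) (Fin m) ℝ) :
    0 ≤ (Y * Yᵀ).trace := by
  rw [Matrix.trace]
  refine Finset.sum_nonneg fun i _ => ?_
  rw [Matrix.diag_apply, Matrix.mul_apply]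
  exact Finset.sum_nonneg fun j _ => by rw [Matrix.transpose_apply]; exact mul_self_nonneg _

lemma trace_sq_le {m : ℕ} (X : Matrix (Fin m) (Fin m) ℝ) :
    (X * X).trace ≤ (X * Xᵀ).trace := by
  have h := trace_mul_transpose_nonneg (X - Xᵀ)
  have e1 : (X - Xᵀ) * (X - Xᵀ)ᵀ = X * Xᵀ - X * X - Xᵀ * Xᵀ + Xᵀ * X := by
    rw [transpose_sub, transpose_transpose]
    noncomm_ring
  rw [e1, trace_add, trace_sub, trace_sub] at h
  have e2 : (Xᵀ * Xᵀ).trace = (X * X).trace := by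
    rw [← trace_transpose (X * X), transpose_mul]
  have e3 : (Xᵀ * X).trace = (X * Xᵀ).trace := trace_mul_comm _ _
  linarith

open scoped MatrixOrder in
lemma trace_proj_le {m : ℕ} {A : Matrix (Fin m) (Fin m) ℝ} (hA : A.PosDef)
    {P : Matrix (Fin m) (Fin m) ℝ} (hPsym : Pᵀ = P) (hPidem : P * P = P) :
    P.trace ≤ (P * A⁻¹ * P * A).trace := by
  set V := CFC.sqrt A with hVdef
  have hVV : V * V = A := CFC.sqrt_mul_sqrt_self A hA.posSemidef.nonneg
  have hVsym : Vᵀ = V := by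
    have := (CFC.sqrt_nonneg A).posSemidef.1
    rwa [IsHermitian, conjTranspose_eq_transpose_of_trivial] at this
  have hVdet : IsUnit V.det := by
    have hdet : V.det * V.det = A.det := by rw [← det_mul, hVV]
    have : V.det ≠ 0 := by
      intro h0
      have := hA.det_pos
      rw [← hdet, h0, mul_zero] at this
      exact lt_irrefl _ this
    exact this.isUnit
  have hinv1 : V⁻¹ * V = 1 := nonsing_inv_mul V hVdet
  have hAinv : A⁻¹ = V⁻¹ * V⁻¹ := by rw [← hVV, Matrix.mul_inv_rev]
  set X := V * P * V⁻¹ with hX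
  have hXT : Xᵀ = V⁻¹ * P * V := by
    rw [hX, transpose_mul, transpose_mul, transpose_nonsing_inv, hVsym, hPsym, Matrix.mul_assoc]
  have h1 : (X * X).trace = P.trace := by
    have : X * X = V * P * V⁻¹ := by
      rw [hX]
      calc V * P * V⁻¹ * (V * P * V⁻¹) = V * (P * (V⁻¹ * V) * P) * V⁻¹ := by
            simp only [Matrix.mul_assoc]
        _ = V * P * V⁻¹ := by rw [hinv1, Matrix.mul_one, hPidem]
    rw [this, trace_mul_cycle, hinv1, Matrix.one_mul]
  have h2 : (X * Xᵀ).trace = (P * A⁻¹ * P * A).trace := by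
    have : X * Xᵀ = V * (P * A⁻¹ * P) * V := by
      rw [hX, hXT, hAinv]
      simp only [Matrix.mul_assoc]
    rw [this, trace_mul_cycle, hVV, trace_mul_comm]
  calc P.trace = (X * X).trace := h1.symm
    _ ≤ (X * Xᵀ).trace := trace_sq_le X
    _ = (P * A⁻¹ * P * A).trace := h2

lemma push_through {n r : ℕ} (B : Matrix (Fin n) (Fin r) ℝ) :
    (1 + B * Bᵀ)⁻¹ * B = B * (1 + Bᵀ * B)⁻¹ := by
  have hBBt : (B * Bᵀ).PosSemidef := by
    have := posSemidef_self_mul_conjTranspose B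
    rwa [conjTranspose_eq_transpose_of_trivial] at this
  have hBtB : (Bᵀ * B).PosSemidef := by
    have := posSemidef_conjTranspose_mul_self B
    rwa [conjTranspose_eq_transpose_of_trivial] at this
  have hM : (1 + B * Bᵀ).PosDef := Matrix.PosDef.add_posSemidef Matrix.PosDef.one hBBt
  have hA : (1 + Bᵀ * B).PosDef := Matrix.PosDef.add_posSemidef Matrix.PosDef.one hBtB
  have key : (1 + B * Bᵀ) * B = B * (1 + Bᵀ * B) := by
    rw [Matrix.add_mul, Matrix.mul_add, Matrix.one_mul, Matrix.mul_one, Matrix.mul_assoc]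
  have e : B = (1 + B * Bᵀ) * (B * (1 + Bᵀ * B)⁻¹) := by
    rw [← Matrix.mul_assoc, key, Matrix.mul_assoc,
      mul_nonsing_inv _ hA.det_pos.ne'.isUnit, Matrix.mul_one]
  calc (1 + B * Bᵀ)⁻¹ * B
      = (1 + B * Bᵀ)⁻¹ * ((1 + B * Bᵀ) * (B * (1 + Bᵀ * B)⁻¹)) := by rw [← e]
    _ = B * (1 + Bᵀ * B)⁻¹ := by
        rw [← Matrix.mul_assoc, nonsing_inv_mul _ hM.det_pos.ne'.isUnit, Matrix.one_mul]

open scoped MatrixOrder in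
lemma det_div_bound {m : ℕ} {M N : Matrix (Fin m) (Fin m) ℝ} (hM : M.PosDef)
    (hN : N.PosSemidef) :
    N.det ≤ M.det * Real.exp ((M⁻¹ * N).trace - m) := by
  have hMinv : M⁻¹.PosDef := hM.inv
  set R := CFC.sqrt M⁻¹ with hRdef
  have hRR : R * R = M⁻¹ := CFC.sqrt_mul_sqrt_self M⁻¹ hMinv.posSemidef.nonneg
  have hRsym : Rᵀ = R := by
    have := (CFC.sqrt_nonneg M⁻¹).posSemidef.1
    rwa [IsHermitian, conjTranspose_eq_transpose_of_trivial] at this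
  have hY : (R * N * R).PosSemidef := by
    have := hN.conjTranspose_mul_mul_same R
    rwa [conjTranspose_eq_transpose_of_trivial, hRsym] at this
  have h := det_le_exp_trace hY
  have hdet : (R * N * R).det = M⁻¹.det * N.det := by
    rw [det_mul, det_mul, ← hRR, det_mul]; ring
  have htr : (R * N * R).trace = (M⁻¹ * N).trace := by
    rw [trace_mul_cycle, hRR]
  rw [hdet, htr] at h
  have hMdet := hM.det_pos
  have hMinvdet : M⁻¹.det = M.det⁻¹ := by
    rw [det_nonsing_inv, Ring.inverse_eq_inv']
  rw [hMinvdet] at h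
  calc N.det = M.det * (M.det⁻¹ * N.det) := by field_simp
    _ ≤ M.det * Real.exp ((M⁻¹ * N).trace - m) :=
        mul_le_mul_of_nonneg_left h (le_of_lt hMdet)

lemma step2 {n r : ℕ} (B : Matrix (Fin n) (Fin r) ℝ) (P : Matrix (Fin r) (Fin r) ℝ)
    (hPsym : Pᵀ = P) (hPidem : P * P = P) :
    ((B * P * Bᵀ) * (1 + B * Bᵀ)⁻¹).trace
      + ((B * P * Bᵀ) * (1 + B * Bᵀ)⁻¹ * (B * P * Bᵀ)).trace ≤ (B * P * Bᵀ).trace := by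
  set G := Bᵀ * B with hGdef
  set A := 1 + G with hAdef
  set S := A⁻¹ with hSdef
  set Minv := (1 + B * Bᵀ)⁻¹ with hMinvdef
  have hG : G.PosSemidef := by
    have := posSemidef_conjTranspose_mul_self B
    rwa [conjTranspose_eq_transpose_of_trivial] at this
  have hA : A.PosDef := Matrix.PosDef.add_posSemidef Matrix.PosDef.one hG
  have hpt : Minv * B = B * S := push_through B
  have hGS : G * S = 1 - S := by
    have hAS : A * S = 1 := mul_nonsing_inv _ hA.det_pos.ne'.isUnit
    rw [hAdef, Matrix.add_mul, Matrix.one_mul] at hAS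
    exact eq_sub_of_add_eq' hAS
  -- key matrix identity: Bᵀ * (Minv * B) = 1 - S
  have hkey : Bᵀ * (Minv * B) = 1 - S := by
    rw [hpt, ← Matrix.mul_assoc, ← hGdef, hGS]
  -- trace computations
  have t0 : (B * P * Bᵀ).trace = (P * G).trace := by
    rw [Matrix.mul_assoc, trace_mul_comm, Matrix.mul_assoc, ← hGdef]
  have t1 : ((B * P * Bᵀ) * Minv).trace = (P * (1 - S)).trace := by
    have e : (B * P * Bᵀ) * Minv = B * (P * (Bᵀ * Minv)) := by
      simp only [Matrix.mul_assoc]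
    rw [e, trace_mul_comm]
    have e2 : (P * (Bᵀ * Minv)) * B = P * (1 - S) := by
      rw [Matrix.mul_assoc, Matrix.mul_assoc, hkey]
    rw [e2]
  have t2 : ((B * P * Bᵀ) * Minv * (B * P * Bᵀ)).trace
      = (P * ((1 - S) * (P * G))).trace := by
    have e : (B * P * Bᵀ) * Minv * (B * P * Bᵀ)
        = B * (P * (Bᵀ * (Minv * (B * (P * Bᵀ))))) := by
      simp only [Matrix.mul_assoc]
    rw [e, trace_mul_comm]
    have e2 : (P * (Bᵀ * (Minv * (B * (P * Bᵀ))))) * B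
        = P * ((1 - S) * (P * G)) := by
      have : Minv * (B * (P * Bᵀ)) = B * (S * (P * Bᵀ)) := by
        rw [← Matrix.mul_assoc, hpt, Matrix.mul_assoc]
      rw [this]
      calc P * (Bᵀ * (B * (S * (P * Bᵀ)))) * B
          = P * ((Bᵀ * B) * S * (P * (Bᵀ * B))) := by simp only [Matrix.mul_assoc]
        _ = P * ((1 - S) * (P * G)) := by rw [← hGdef, hGS]
    rw [e2]
  rw [t0, t1, t2]
  -- reduce to trace_proj_le
  have hC := trace_proj_le hA hPsym hPidem
  have hexp : (P * A⁻¹ * P * A).trace = (P * S).trace + (P * (S * (P * G))).trace := by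
    rw [← hSdef, hAdef, Matrix.mul_add, trace_add, Matrix.mul_one]
    congr 1
    · rw [trace_mul_cycle, hPidem]
    · simp only [Matrix.mul_assoc]
  rw [hexp] at hC
  have exp1 : (P * (1 - S)).trace = P.trace - (P * S).trace := by
    rw [Matrix.mul_sub, Matrix.mul_one, trace_sub]
  have exp2 : (P * ((1 - S) * (P * G))).trace
      = (P * G).trace - (P * (S * (P * G))).trace := by
    rw [Matrix.sub_mul, Matrix.mul_sub, Matrix.one_mul, trace_sub, ← Matrix.mul_assoc,
      hPidem]
  rw [exp1, exp2]
  linarith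

/-- For `L = B * Bᵀ` and `L̂ = B * P * Bᵀ` with `P` symmetric idempotent,
`det (1 + L) / det (1 + L̂) ≥ exp (tr (L (1 + L)⁻¹) - tr L̂ + tr (L̂ (1 + L)⁻¹ L̂))`. -/
theorem det_ratio_ge_exp {n r : ℕ} (B : Matrix (Fin n) (Fin r) ℝ)
    (P : Matrix (Fin r) (Fin r) ℝ) (hPsym : Pᵀ = P) (hPidem : P * P = P)
    (L Lhat : Matrix (Fin n) (Fin n) ℝ) (hL : L = B * Bᵀ) (hLhat : Lhat = B * P * Bᵀ) :
    Real.exp ((L * (1 + L)⁻¹).trace - Lhat.trace + (Lhat * (1 + L)⁻¹ * Lhat).trace)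
      ≤ (1 + L).det / (1 + Lhat).det := by
  have hLpsd : L.PosSemidef := by
    rw [hL]
    have := posSemidef_self_mul_conjTranspose B
    rwa [conjTranspose_eq_transpose_of_trivial] at this
  have hLhatpsd : Lhat.PosSemidef := by
    have e : Lhat = (B * P) * (B * P)ᵀ := by
      rw [transpose_mul, hPsym, hLhat, Matrix.mul_assoc, Matrix.mul_assoc,
        ← Matrix.mul_assoc P P Bᵀ, hPidem]
    rw [e]
    have := posSemidef_self_mul_conjTranspose (B * P)
    rwa [conjTranspose_eq_transpose_of_trivial] at this
  have hM : (1 + L).PosDef := Matrix.PosDef.add_posSemidef Matrix.PosDef.one hLpsd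
  have hN : (1 + Lhat).PosDef := Matrix.PosDef.add_posSemidef Matrix.PosDef.one hLhatpsd
  set M := 1 + L with hMdef
  set N := 1 + Lhat with hNdef
  have hNdetpos := hN.det_pos
  have hMdetpos := hM.det_pos
  -- step 2
  have hs2 : (Lhat * M⁻¹).trace + (Lhat * M⁻¹ * Lhat).trace ≤ Lhat.trace := by
    have := step2 B P hPsym hPidem
    rw [← hL, ← hLhat, ← hMdef] at this
    exact this
  -- trace bookkeeping
  have htrM : (M⁻¹).trace + (M⁻¹ * L).trace = (n : ℝ) := by
    have h1 : M⁻¹ * M = 1 := nonsing_inv_mul _ hM.det_pos.ne'.isUnit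
    have h2 : M⁻¹ * M = M⁻¹ + M⁻¹ * L := by rw [hMdef, Matrix.mul_add, Matrix.mul_one]
    have := congrArg Matrix.trace (h2.symm.trans h1)
    rw [trace_add, trace_one] at this
    simpa using this
  have htrN : (M⁻¹ * N).trace = (M⁻¹).trace + (M⁻¹ * Lhat).trace := by
    rw [hNdef, Matrix.mul_add, Matrix.mul_one, trace_add]
  -- exponent comparison
  have hexp : (L * M⁻¹).trace - Lhat.trace + (Lhat * M⁻¹ * Lhat).trace
      ≤ (n : ℝ) - (M⁻¹ * N).trace := by
    have c1 : (L * M⁻¹).trace = (M⁻¹ * L).trace := trace_mul_comm _ _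
    have c2 : (Lhat * M⁻¹).trace = (M⁻¹ * Lhat).trace := trace_mul_comm _ _
    rw [c1, htrN]
    linarith [hs2, c2.symm.le]
  -- step 1
  have hs1 := det_div_bound hM hN.posSemidef
  rw [le_div_iff₀ hNdetpos]
  calc Real.exp ((L * M⁻¹).trace - Lhat.trace + (Lhat * M⁻¹ * Lhat).trace) * N.det
      ≤ Real.exp ((n : ℝ) - (M⁻¹ * N).trace)
        * (M.det * Real.exp ((M⁻¹ * N).trace - n)) := by
        apply mul_le_mul (Real.exp_le_exp.mpr hexp) hs1 (le_of_lt hNdetpos)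
          (le_of_lt (by positivity))
    _ = M.det := by
        rw [mul_comm, mul_assoc, ← Real.exp_add]
        simp
end

section
/- Let L = B Bᵀ be a real psd n×n matrix, L̂ = B P Bᵀ with P a real symmetric idempotent matrix, and suppose the quantities l_i = [L − L̂ + L̂(I + L̂)⁻¹]_{ii} are strictly positive for all i. Let ŝ = Σ_{i=1}^n l_i, s̃ = tr(L̂(I + L̂)⁻¹), and fix q > 0. For any t ≥ 0 and any sequence σ = (σ₁,…,σ_t) ∈ {1,…,n}^t, let Ã_σ be the t×t matrix with entries (Ã_σ)_{ab} = (ŝ/q) · L_{σ_a σ_b} / √(l_{σ_a} l_{σ_b}). Then det(I_t + Ã_σ) ≤ e^{t ŝ/q − s̃} · det(I_n + L̂). Consequently the acceptance probability e^{s̃} det(I + Ã_σ) / ( e^{t ŝ/q} det(I + L̂) ) used in the rejection sampling step of DPP-VFX is at most 1. -/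
open Matrix

lemma det_le_exp_trace_sub_card {m : ℕ} {X : Matrix (Fin m) (Fin m) ℝ}
    (hX : X.PosSemidef) : X.det ≤ Real.exp (X.trace - m) := by
  have hH := hX.isHermitian
  have htr : X.trace = ∑ i, hH.eigenvalues i := by
    nth_rewrite 1 [hH.spectral_theorem]
    rw [Unitary.conjStarAlgAut_apply, trace_mul_cycle, mem_unitaryGroup_iff'.mp (IsHermitian.eigenvectorUnitary hH).2,
      one_mul, trace_diagonal]
    simp
  rw [hH.det_eq_prod_eigenvalues, htr]
  calc (∏ i, (hH.eigenvalues i : ℝ))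
      ≤ ∏ i, Real.exp (hH.eigenvalues i - 1) := by
        apply Finset.prod_le_prod
        · intro i _; exact hX.eigenvalues_nonneg i
        · intro i _
          have := Real.add_one_le_exp (hH.eigenvalues i - 1)
          linarith
    _ = Real.exp (∑ i, (hH.eigenvalues i - 1)) := (Real.exp_sum _ _).symm
    _ = Real.exp (∑ i, hH.eigenvalues i - m) := by
        rw [Finset.sum_sub_distrib]
        simp

open scoped MatrixOrder in
lemma core_det_ineq {r : ℕ} {Wh Wt : Matrix (Fin r) (Fin r) ℝ}
    (hWh : Wh.PosSemidef) (hWt : Wt.PosSemidef) :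
    (1 + Wt).det ≤
      Real.exp ((Wt * (1 + Wh)⁻¹).trace - (Wh * (1 + Wh)⁻¹).trace) * (1 + Wh).det := by
  set D : Matrix (Fin r) (Fin r) ℝ := 1 + Wh with hD
  have hD_pd : D.PosDef := by
    rw [hD, add_comm]
    exact Matrix.PosDef.posSemidef_add hWh Matrix.PosDef.one
  have hDdet : IsUnit D.det := hD_pd.det_pos.ne'.isUnit
  have hDK : D * D⁻¹ = 1 := Matrix.mul_nonsing_inv D hDdet
  have hKD : D⁻¹ * D = 1 := Matrix.nonsing_inv_mul D hDdet
  set S : Matrix (Fin r) (Fin r) ℝ := CFC.sqrt D with hS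
  have hSS : S * S = D := CFC.sqrt_mul_sqrt_self D hD_pd.posSemidef.nonneg
  have hSherm : Sᴴ = S := (CFC.sqrt_nonneg D).posSemidef.1
  have hSdet : S.det ≠ 0 := by
    intro h
    have : D.det = 0 := by rw [← hSS, det_mul, h, mul_zero]
    exact hD_pd.det_pos.ne' this
  have h1Wt : (1 + Wt).PosSemidef := Matrix.PosDef.one.posSemidef.add hWt
  set M : Matrix (Fin r) (Fin r) ℝ := S⁻¹ * (1 + Wt) * S⁻¹ with hM
  have hM_psd : M.PosSemidef := by
    have := h1Wt.mul_mul_conjTranspose_same S⁻¹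
    rwa [conjTranspose_nonsing_inv, hSherm] at this
  have hSinv2 : S⁻¹ * S⁻¹ = D⁻¹ := by rw [← Matrix.mul_inv_rev, hSS]
  have hdetM : M.det * D.det = (1 + Wt).det := by
    have hds : S.det * S.det = D.det := by rw [← det_mul, hSS]
    rw [hM, det_mul, det_mul, det_nonsing_inv, Ring.inverse_eq_inv, ← hds]
    field_simp
  have htrM : M.trace = D⁻¹.trace + (Wt * D⁻¹).trace := by
    rw [hM, Matrix.mul_assoc, trace_mul_comm, Matrix.mul_assoc, hSinv2,
      Matrix.add_mul, trace_add, Matrix.one_mul]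
  have htrWh : (Wh * D⁻¹).trace = (r : ℝ) - D⁻¹.trace := by
    have h1 : Wh * D⁻¹ = 1 - D⁻¹ := by
      have h2 : (1 + Wh) * D⁻¹ = 1 := hDK
      rw [Matrix.add_mul, Matrix.one_mul] at h2
      linear_combination (norm := noncomm_ring) h2
    rw [h1, trace_sub, trace_one]
    simp
  have hfin := det_le_exp_trace_sub_card hM_psd
  calc (1 + Wt).det = M.det * D.det := hdetM.symm
    _ ≤ Real.exp (M.trace - r) * D.det :=
        mul_le_mul_of_nonneg_right hfin hD_pd.det_pos.le
    _ = Real.exp ((Wt * D⁻¹).trace - (Wh * D⁻¹).trace) * D.det := by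
        rw [htrM, htrWh]; ring_nf

/-- With `L = B Bᵀ`, `L̂ = B P Bᵀ` (`P` symmetric idempotent), strictly
positive approximate leverage scores `l_i = [L - L̂ + L̂ (1 + L̂)⁻¹]_{ii}`, `ŝ = Σᵢ l_i`,
`s̃ = tr (L̂ (1 + L̂)⁻¹)` and `q > 0`: for any `t` and sequence `σ ∈ [n]^t`, the rescaled
kernel `Ã_σ` with `(Ã_σ)_{ab} = (ŝ/q) L_{σ_a σ_b} / √(l_{σ_a} l_{σ_b})` satisfies
`det (1 + Ã_σ) ≤ e^{t ŝ / q - s̃} det (1 + L̂)`; hence the acceptance probability of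
DPP-VFX is at most `1`. -/
theorem acceptance_prob_le_one {n r : ℕ} (B : Matrix (Fin n) (Fin r) ℝ)
    (P : Matrix (Fin r) (Fin r) ℝ) (hPsym : Pᵀ = P) (hPidem : P * P = P)
    (L Lhat : Matrix (Fin n) (Fin n) ℝ) (hL : L = B * Bᵀ) (hLhat : Lhat = B * P * Bᵀ)
    (l : Fin n → ℝ) (hl : ∀ i, l i = (L - Lhat + Lhat * (1 + Lhat)⁻¹) i i)
    (hlpos : ∀ i, 0 < l i)
    (shat stil q : ℝ) (hshat : shat = ∑ i, l i)
    (hstil : stil = (Lhat * (1 + Lhat)⁻¹).trace) (hq : 0 < q)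
    (t : ℕ) (σ : Fin t → Fin n) (Atil : Matrix (Fin t) (Fin t) ℝ)
    (hAtil : ∀ a b, Atil a b
        = shat / q * L (σ a) (σ b) / Real.sqrt (l (σ a) * l (σ b))) :
    (1 + Atil).det ≤ Real.exp ((t : ℝ) * shat / q - stil) * (1 + Lhat).det
    ∧ Real.exp stil * (1 + Atil).det
        / (Real.exp ((t : ℝ) * shat / q) * (1 + Lhat).det) ≤ 1 := by
  have hsnn : 0 ≤ shat := hshat ▸ Finset.sum_nonneg fun i _ => (hlpos i).le
  set C : Matrix (Fin n) (Fin r) ℝ := B * P with hC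
  have hCt : Cᵀ = P * Bᵀ := by rw [hC, transpose_mul, hPsym]
  have hCP : C * P = C := by rw [hC, Matrix.mul_assoc, hPidem]
  have hPCt : P * Cᵀ = Cᵀ := by rw [hCt, ← Matrix.mul_assoc, hPidem]
  have hLhatC : Lhat = C * Cᵀ := by rw [hLhat, hCt, ← Matrix.mul_assoc, hCP]
  set Wh : Matrix (Fin r) (Fin r) ℝ := Cᵀ * C with hWh
  have hWh_psd : Wh.PosSemidef := by
    rw [hWh, ← conjTranspose_eq_transpose_of_trivial]
    exact posSemidef_conjTranspose_mul_self C
  set D : Matrix (Fin r) (Fin r) ℝ := 1 + Wh with hDdef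
  have hD_pd : D.PosDef := by
    rw [hDdef, add_comm]
    exact Matrix.PosDef.posSemidef_add hWh_psd Matrix.PosDef.one
  have hDdet : IsUnit D.det := hD_pd.det_pos.ne'.isUnit
  have hDK : D * D⁻¹ = 1 := Matrix.mul_nonsing_inv D hDdet
  have hKD : D⁻¹ * D = 1 := Matrix.nonsing_inv_mul D hDdet
  have hPWh : P * Wh = Wh := by rw [hWh, ← Matrix.mul_assoc, hPCt]
  have hWhP : Wh * P = Wh := by rw [hWh, Matrix.mul_assoc, hCP]
  have hPD : P * D = D * P := by
    rw [hDdef]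
    simp [Matrix.mul_add, Matrix.add_mul, hPWh, hWhP]
  have hPK : P * D⁻¹ = D⁻¹ * P := by
    have h := congrArg (fun X => D⁻¹ * X * D⁻¹) hPD
    simp only [Matrix.mul_assoc] at h
    rw [hDK, Matrix.mul_one] at h
    rw [← Matrix.mul_assoc D⁻¹ D (P * D⁻¹), hKD, Matrix.one_mul] at h
    exact h.symm
  have hDP' : D * P = P + Wh := by
    rw [hDdef, Matrix.add_mul, Matrix.one_mul, hWhP]
  have hG : D⁻¹ = 1 - P + P * D⁻¹ * P := by
    refine (Matrix.inv_eq_left_inv ?_)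
    rw [Matrix.add_mul, Matrix.sub_mul, Matrix.one_mul,
      Matrix.mul_assoc (P * D⁻¹) P D, hPD, ← Matrix.mul_assoc (P * D⁻¹) D P,
      Matrix.mul_assoc P D⁻¹ D, hKD, Matrix.mul_one, hPidem, hDP', hDdef]
    abel
  -- (1 + Lhat) facts
  have hLhat_psd : Lhat.PosSemidef := by
    rw [hLhatC, ← conjTranspose_eq_transpose_of_trivial]
    exact posSemidef_self_mul_conjTranspose C
  have hE_pd : (1 + Lhat).PosDef := by
    rw [add_comm]
    exact Matrix.PosDef.posSemidef_add hLhat_psd Matrix.PosDef.one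
  have hEdet : IsUnit (1 + Lhat).det := hE_pd.det_pos.ne'.isUnit
  have h0 : Cᵀ * (1 + Lhat) = D * Cᵀ := by
    rw [hLhatC, hDdef, Matrix.mul_add, Matrix.mul_one, Matrix.add_mul, Matrix.one_mul,
      hWh, Matrix.mul_assoc Cᵀ C Cᵀ]
  have hswap : Cᵀ * (1 + Lhat)⁻¹ = D⁻¹ * Cᵀ := by
    have h1 := congrArg (fun X => D⁻¹ * X * (1 + Lhat)⁻¹) h0
    simp only [Matrix.mul_assoc] at h1
    rw [Matrix.mul_nonsing_inv _ hEdet, Matrix.mul_one] at h1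
    rw [← Matrix.mul_assoc D⁻¹ D (Cᵀ * (1 + Lhat)⁻¹), hKD, Matrix.one_mul] at h1
    exact h1.symm
  have hLhatinv : Lhat * (1 + Lhat)⁻¹ = C * (D⁻¹ * Cᵀ) := by
    nth_rewrite 1 [hLhatC]
    rw [Matrix.mul_assoc, hswap]
  have hexp : B * D⁻¹ * Bᵀ = L - Lhat + C * (D⁻¹ * Cᵀ) := by
    conv_lhs => rw [hG]
    rw [hL, hLhat, hC, hCt]
    simp only [Matrix.mul_add, Matrix.add_mul, Matrix.mul_sub, Matrix.sub_mul,
      Matrix.mul_one, Matrix.one_mul, Matrix.mul_assoc]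
  have hBKB : L - Lhat + Lhat * (1 + Lhat)⁻¹ = B * D⁻¹ * Bᵀ := by
    rw [hLhatinv, hexp]
  have hlK : ∀ i, l i = (B * D⁻¹ * Bᵀ) i i := fun i => by rw [hl i, hBKB]
  have hstilK : stil = (Wh * D⁻¹).trace := by
    rw [hstil, hLhatinv, trace_mul_comm, Matrix.mul_assoc, ← hWh, trace_mul_comm]
  -- the V matrix
  set g : Fin t → ℝ := fun a => Real.sqrt (shat / (q * l (σ a))) with hg
  set V : Matrix (Fin t) (Fin r) ℝ := Matrix.of (fun a j => g a * B (σ a) j) with hV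
  have hgnn : ∀ a, 0 ≤ shat / (q * l (σ a)) :=
    fun a => div_nonneg hsnn (mul_pos hq (hlpos _)).le
  have hgg : ∀ a, g a * g a = shat / (q * l (σ a)) :=
    fun a => Real.mul_self_sqrt (hgnn a)
  have hVVt : V * Vᵀ = Atil := by
    ext a b
    rw [Matrix.mul_apply, hAtil a b]
    simp only [hV, Matrix.of_apply, transpose_apply]
    have hcc : g a * g b = shat / q / Real.sqrt (l (σ a) * l (σ b)) := by
      simp only [hg]
      rw [← Real.sqrt_mul (hgnn a)]
      have h2 : shat / (q * l (σ a)) * (shat / (q * l (σ b)))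
          = (shat / q) ^ 2 / (l (σ a) * l (σ b)) := by
        field_simp
      rw [h2, Real.sqrt_div (sq_nonneg _), Real.sqrt_sq (div_nonneg hsnn hq.le)]
    calc ∑ j, g a * B (σ a) j * (g b * B (σ b) j)
        = g a * g b * ∑ j, B (σ a) j * B (σ b) j := by
          rw [Finset.mul_sum]
          exact Finset.sum_congr rfl fun j _ => by ring
      _ = g a * g b * L (σ a) (σ b) := by
          rw [hL, Matrix.mul_apply]
          simp only [transpose_apply]
      _ = shat / q * L (σ a) (σ b) / Real.sqrt (l (σ a) * l (σ b)) := by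
          rw [hcc]; ring
  have hWt_psd : (Vᵀ * V).PosSemidef := by
    rw [← conjTranspose_eq_transpose_of_trivial]
    exact posSemidef_conjTranspose_mul_self V
  -- trace computation
  have htrWt : ((Vᵀ * V) * D⁻¹).trace = (t : ℝ) * shat / q := by
    rw [Matrix.mul_assoc, trace_mul_comm]
    have hdiag : ∀ a, ((V * D⁻¹) * Vᵀ) a a = shat / q := by
      intro a
      have h1 : ∀ k, (V * D⁻¹) a k = g a * (B * D⁻¹) (σ a) k := by
        intro k
        rw [Matrix.mul_apply, Matrix.mul_apply, Finset.mul_sum]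
        refine Finset.sum_congr rfl fun j _ => ?_
        simp only [hV, Matrix.of_apply]
        ring
      rw [Matrix.mul_apply]
      calc ∑ k, (V * D⁻¹) a k * Vᵀ k a
          = g a * g a * ∑ k, (B * D⁻¹) (σ a) k * Bᵀ k (σ a) := by
            rw [Finset.mul_sum]
            refine Finset.sum_congr rfl fun k _ => ?_
            rw [h1 k]
            simp only [hV, Matrix.of_apply, transpose_apply]
            ring
        _ = (shat / (q * l (σ a))) * (B * D⁻¹ * Bᵀ) (σ a) (σ a) := by
            rw [hgg, Matrix.mul_apply]
        _ = (shat / (q * l (σ a))) * l (σ a) := by rw [← hlK]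
        _ = shat / q := by
            have hne := (hlpos (σ a)).ne'
            field_simp
    calc (V * D⁻¹ * Vᵀ).trace = ∑ a, ((V * D⁻¹) * Vᵀ) a a := rfl
      _ = ∑ _a : Fin t, shat / q := Finset.sum_congr rfl fun a _ => hdiag a
      _ = (t : ℝ) * shat / q := by
          rw [Finset.sum_const, Finset.card_univ, Fintype.card_fin, nsmul_eq_mul]
          ring
  -- assemble
  have hdetA : (1 + Atil).det = (1 + Vᵀ * V).det := by
    rw [← hVVt, det_one_add_mul_comm]
  have hdetL : (1 + Lhat).det = D.det := by
    rw [hLhatC, det_one_add_mul_comm, ← hWh, ← hDdef]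
  have hcore := core_det_ineq hWh_psd hWt_psd
  rw [← hDdef] at hcore
  have part1 : (1 + Atil).det ≤ Real.exp ((t : ℝ) * shat / q - stil) * (1 + Lhat).det := by
    calc (1 + Atil).det = (1 + Vᵀ * V).det := hdetA
      _ ≤ Real.exp (((Vᵀ * V) * D⁻¹).trace - (Wh * D⁻¹).trace) * D.det := hcore
      _ = Real.exp ((t : ℝ) * shat / q - stil) * (1 + Lhat).det := by
          rw [htrWt, ← hstilK, hdetL]
  refine ⟨part1, ?_⟩
  rw [div_le_one (mul_pos (Real.exp_pos _) hE_pd.det_pos)]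
  calc Real.exp stil * (1 + Atil).det
      ≤ Real.exp stil * (Real.exp ((t : ℝ) * shat / q - stil) * (1 + Lhat).det) :=
        mul_le_mul_of_nonneg_left part1 (Real.exp_nonneg _)
    _ = Real.exp ((t : ℝ) * shat / q) * (1 + Lhat).det := by
        rw [← mul_assoc, ← Real.exp_add]
        ring_nf
end

section
/- Let L be a real psd n×n matrix, let p = (p₁,…,p_n) be a probability vector with all p_i > 0, and let r > 0. Define the n×n matrix à by Ã_{ij} = L_{ij} / ( r √(p_i p_j) ), and for a sequence σ ∈ {1,…,n}^t let Ã_σ denote the t×t matrix with entries (Ã_σ)_{ab} = Ã_{σ_a σ_b}. Then Σ_{t=0}^∞ ( e^{−r} r^t / t! ) · Σ_{σ ∈ {1,…,n}^t} ( Π_{a=1}^t p_{σ_a} ) · det(I_t + Ã_σ) = det(I_n + L). Equivalently, if t ∼ Poisson(r) and σ₁,…,σ_t are drawn i.i.d. from p, then E[ det(I + Ã_σ) ] = det(I + L). -/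
open Matrix Finset




private lemma det_piecewise_one {m : Type*} [Fintype m] [DecidableEq m]
    (M : Matrix m m ℝ) (s : Finset m) :
    Matrix.det (s.piecewise (M : m → m → ℝ) (1 : Matrix m m ℝ)) =
      (M.submatrix (Subtype.val : {x // x ∈ s} → m) Subtype.val).det := by
  classical
  set N : Matrix m m ℝ := s.piecewise (M : m → m → ℝ) (1 : Matrix m m ℝ) with hN
  let e : {a // a ∈ s} ⊕ {a // a ∉ s} ≃ m := Equiv.sumCompl (· ∈ s)
  have h : N.submatrix e e =
      Matrix.fromBlocks (M.submatrix Subtype.val Subtype.val)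
        (M.submatrix Subtype.val Subtype.val) 0 1 := by
    ext i j
    rw [Matrix.submatrix_apply]
    cases i with
    | inl a =>
      cases j with
      | inl b =>
        simp [N, e, Finset.piecewise, a.2]
      | inr b =>
        simp [N, e, Finset.piecewise, a.2]
    | inr a =>
      cases j with
      | inl b =>
        have : (a : m) ≠ (b : m) := fun h => a.2 (h ▸ b.2)
        simp [N, e, Finset.piecewise, a.2, Matrix.one_apply, this]
      | inr b =>
        simp [N, e, Finset.piecewise, a.2, Matrix.one_apply,
          Subtype.ext_iff]
  calc N.det = (N.submatrix e e).det := (Matrix.det_submatrix_equiv_self e N).symm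
    _ = _ := by rw [h, Matrix.det_fromBlocks_zero₂₁, Matrix.det_one, mul_one]

private lemma det_one_add_expand {m : Type*} [Fintype m] [DecidableEq m] (M : Matrix m m ℝ) :
    (1 + M).det = ∑ s : Finset m,
      (M.submatrix (Subtype.val : {x // x ∈ s} → m) Subtype.val).det := by
  have h0 : (1 + M) = M + 1 := add_comm _ _
  rw [h0]
  have h1 : (M + 1 : Matrix m m ℝ).det
      = Matrix.detRowAlternating ((M : m → m → ℝ) + (1 : Matrix m m ℝ)) := rfl
  have h2 := (Matrix.detRowAlternating (R := ℝ) (n := m)).toMultilinearMap.map_add_univ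
    (M : m → m → ℝ) (1 : Matrix m m ℝ)
  rw [h1]
  exact h2.trans (Finset.sum_congr rfl fun s _ => det_piecewise_one M s)


private noncomputable def cfun {n : ℕ} (L : Matrix (Fin n) (Fin n) ℝ) (k : ℕ) : ℝ :=
  ∑ τ : Fin k → Fin n, (L.submatrix τ τ).det

private lemma det_submatrix_zero_of_not_inj {n k : Type*} [Fintype n] [Fintype k]
    [DecidableEq k] (L : Matrix n n ℝ) {τ : k → n} (h : ¬ Function.Injective τ) :
    (L.submatrix τ τ).det = 0 := by
  simp only [Function.Injective, not_forall] at h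
  obtain ⟨a, b, hab, hne⟩ := h
  refine Matrix.det_zero_of_row_eq hne ?_
  funext j
  simp [Matrix.submatrix_apply, hab]

private lemma cfun_eq_zero {n : ℕ} (L : Matrix (Fin n) (Fin n) ℝ) {k : ℕ} (hk : n < k) :
    cfun L k = 0 := by
  refine Finset.sum_eq_zero fun τ _ => ?_
  refine det_submatrix_zero_of_not_inj L fun hinj => ?_
  have := Fintype.card_le_of_injective τ hinj
  simp only [Fintype.card_fin] at this
  omega

private lemma sum_arrow_det {n : ℕ} (L : Matrix (Fin n) (Fin n) ℝ) {α : Type*} [Fintype α]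
    [DecidableEq α] {k : ℕ} (e : α ≃ Fin k) :
    ∑ τ : α → Fin n, (L.submatrix τ τ).det = cfun L k := by
  rw [cfun]
  refine Fintype.sum_equiv (e.arrowCongr (Equiv.refl (Fin n))) _ _ fun τ => ?_
  have : L.submatrix (⇑(e.arrowCongr (Equiv.refl (Fin n))) τ) (⇑(e.arrowCongr (Equiv.refl (Fin n))) τ)
      = (L.submatrix τ τ).submatrix e.symm e.symm := by
    ext a b; simp [Equiv.arrowCongr]
  rw [this, Matrix.det_submatrix_equiv_self]


private lemma key_term {n : ℕ} (L : Matrix (Fin n) (Fin n) ℝ) (p : Fin n → ℝ)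
    (hp : ∀ i, 0 < p i) (r : ℝ) (hr : 0 < r) {k : ℕ} (τ : Fin k → Fin n) :
    (∏ a, p (τ a)) *
      (Matrix.of fun a b : Fin k =>
        L (τ a) (τ b) / (r * Real.sqrt (p (τ a) * p (τ b)))).det
    = r⁻¹ ^ k * (L.submatrix τ τ).det := by
  set d : Fin k → ℝ := fun a => (Real.sqrt r * Real.sqrt (p (τ a)))⁻¹ with hd
  have hM : (Matrix.of fun a b : Fin k =>
        L (τ a) (τ b) / (r * Real.sqrt (p (τ a) * p (τ b))))
      = Matrix.diagonal d * (L.submatrix τ τ) * Matrix.diagonal d := by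
    ext a b
    rw [Matrix.mul_diagonal, Matrix.diagonal_mul]
    simp only [Matrix.of_apply, Matrix.submatrix_apply, hd]
    rw [Real.sqrt_mul (hp (τ a)).le, div_eq_mul_inv, mul_inv, mul_inv, mul_inv]
    nth_rewrite 1 [← Real.mul_self_sqrt hr.le]
    ring
  rw [hM, Matrix.det_mul, Matrix.det_mul, Matrix.det_diagonal]
  have key : (∏ a, p (τ a)) * ((∏ a, d a) * (L.submatrix τ τ).det * ∏ a, d a)
      = ((∏ a : Fin k, (p (τ a) * (d a * d a)))) * (L.submatrix τ τ).det := by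
    rw [Finset.prod_mul_distrib, Finset.prod_mul_distrib]; ring
  rw [key]
  congr 1
  have : ∀ a : Fin k, p (τ a) * (d a * d a) = r⁻¹ := by
    intro a
    rw [hd]
    rw [← mul_inv, mul_mul_mul_comm, Real.mul_self_sqrt hr.le,
      Real.mul_self_sqrt (hp (τ a)).le, mul_inv]
    rw [mul_comm r⁻¹, ← mul_assoc, mul_inv_cancel₀ (hp (τ a)).ne', one_mul]
  rw [Finset.prod_congr rfl fun a _ => this a, Finset.prod_const, Finset.card_univ,
    Fintype.card_fin]


private lemma sum_split {n t : ℕ} (p : Fin n → ℝ) (hp1 : ∑ i, p i = 1)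
    (A : Matrix (Fin n) (Fin n) ℝ) (s : Finset (Fin t)) :
    ∑ σ : Fin t → Fin n, (∏ a, p (σ a)) *
        (A.submatrix (fun x : {a // a ∈ s} => σ ↑x) (fun x : {a // a ∈ s} => σ ↑x)).det
      = ∑ g : {a // a ∈ s} → Fin n, (∏ x, p (g x)) * (A.submatrix g g).det := by
  classical
  let E : ({a : Fin t // a ∈ s} → Fin n) × ({a : Fin t // a ∉ s} → Fin n) ≃ (Fin t → Fin n) :=
    (Equiv.sumArrowEquivProdArrow _ _ _).symm.trans
      ((Equiv.sumCompl (· ∈ s)).arrowCongr (Equiv.refl (Fin n)))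
  have hE : ∀ (g : {a : Fin t // a ∈ s} → Fin n) (h : {a : Fin t // a ∉ s} → Fin n)
      (x : {a : Fin t // a ∈ s}), E (g, h) ↑x = g x := by
    intro g h x
    simp only [E, Equiv.trans_apply, Equiv.arrowCongr_apply, Function.comp_apply,
      Equiv.refl_apply]
    rw [Equiv.sumCompl_symm_apply_of_pos x.2]
    simp
  have hE' : ∀ (g : {a : Fin t // a ∈ s} → Fin n) (h : {a : Fin t // a ∉ s} → Fin n)
      (x : {a : Fin t // a ∉ s}), E (g, h) ↑x = h x := by
    intro g h x
    simp only [E, Equiv.trans_apply, Equiv.arrowCongr_apply, Function.comp_apply,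
      Equiv.refl_apply]
    rw [Equiv.sumCompl_symm_apply_of_neg x.2]
    simp
  rw [← Equiv.sum_comp E (fun σ => (∏ a, p (σ a)) *
      (A.submatrix (fun x : {a // a ∈ s} => σ ↑x) (fun x : {a // a ∈ s} => σ ↑x)).det),
    Fintype.sum_prod_type]
  have hterm : ∀ (g : {a : Fin t // a ∈ s} → Fin n) (h : {a : Fin t // a ∉ s} → Fin n),
      (∏ a, p (E (g, h) a)) *
        (A.submatrix (fun x : {a // a ∈ s} => E (g, h) ↑x)
          (fun x : {a // a ∈ s} => E (g, h) ↑x)).det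
      = ((∏ x, p (g x)) * (A.submatrix g g).det) * (∏ y, p (h y)) := by
    intro g h
    have hprod : (∏ a, p (E (g, h) a)) = (∏ x, p (g x)) * (∏ y, p (h y)) := by
      rw [← Equiv.prod_comp (Equiv.sumCompl (· ∈ s)) (fun a => p (E (g, h) a)),
        Fintype.prod_sum_type]
      congr 1
      · exact Finset.prod_congr rfl fun x _ => by
          rw [Equiv.sumCompl_apply_inl, hE]
      · exact Finset.prod_congr rfl fun y _ => by
          rw [Equiv.sumCompl_apply_inr, hE']
    have hmat : (A.submatrix (fun x : {a // a ∈ s} => E (g, h) ↑x)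
          (fun x : {a // a ∈ s} => E (g, h) ↑x)) = A.submatrix g g := by
      ext a b; simp [hE]
    rw [hprod, hmat]; ring
  rw [Finset.sum_congr rfl fun g _ => Finset.sum_congr rfl fun h _ => hterm g h]
  rw [Finset.sum_congr rfl fun g _ => (Finset.mul_sum _ _ _).symm]
  have hone : (∑ h : {a : Fin t // a ∉ s} → Fin n, ∏ y, p (h y)) = 1 := by
    rw [← Fintype.prod_sum (fun (_ : {a : Fin t // a ∉ s}) (i : Fin n) => p i)]
    simp [hp1]
  rw [Finset.sum_congr rfl fun g _ => by rw [hone, mul_one]]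


private lemma cfun_eq {n : ℕ} (L : Matrix (Fin n) (Fin n) ℝ) (k : ℕ) :
    cfun L k = (k.factorial : ℝ) *
      ∑ S ∈ Finset.powersetCard k (Finset.univ : Finset (Fin n)),
        (L.submatrix (Subtype.val : {x // x ∈ S} → Fin n) Subtype.val).det := by
  classical
  rw [cfun]
  rw [← Finset.sum_filter_of_ne (p := fun τ : Fin k → Fin n => Function.Injective τ)
    (fun τ _ hτ => by
      by_contra h
      exact hτ (det_submatrix_zero_of_not_inj L h))]
  rw [← Finset.sum_fiberwise_of_maps_to (g := fun τ : Fin k → Fin n => Finset.image τ univ)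
    (t := Finset.powersetCard k (Finset.univ : Finset (Fin n)))
    (fun τ hτ => by
      simp only [Finset.mem_filter] at hτ
      rw [Finset.mem_powersetCard]
      exact ⟨Finset.subset_univ _,
        by rw [Finset.card_image_of_injective _ hτ.2, Finset.card_univ, Fintype.card_fin]⟩)]
  rw [Finset.mul_sum]
  refine Finset.sum_congr rfl fun S hS => ?_
  have hScard : S.card = k := (Finset.mem_powersetCard.1 hS).2
  -- every τ in the fiber gives the same determinant
  have hdet : ∀ τ ∈ (Finset.univ.filter (fun τ : Fin k → Fin n => Function.Injective τ)).filter
      (fun τ => Finset.image τ univ = S),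
      (L.submatrix τ τ).det
        = (L.submatrix (Subtype.val : {x // x ∈ S} → Fin n) Subtype.val).det := by
    intro τ hτ
    simp only [Finset.mem_filter, Finset.mem_univ, true_and] at hτ
    obtain ⟨hinj, himg⟩ := hτ
    have hmem : ∀ a, τ a ∈ S := fun a => himg ▸ Finset.mem_image_of_mem τ (Finset.mem_univ a)
    have hbij : Function.Bijective (fun a : Fin k => (⟨τ a, hmem a⟩ : {x // x ∈ S})) := by
      rw [Fintype.bijective_iff_injective_and_card]
      constructor
      · intro a b hab
        exact hinj (congrArg Subtype.val hab)
      · simp [Fintype.card_coe, hScard]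
    let e : Fin k ≃ {x // x ∈ S} := Equiv.ofBijective _ hbij
    have : L.submatrix τ τ
        = (L.submatrix (Subtype.val : {x // x ∈ S} → Fin n) Subtype.val).submatrix e e := by
      ext a b
      simp [e, Equiv.ofBijective]
    rw [this, Matrix.det_submatrix_equiv_self]
  rw [Finset.sum_congr rfl hdet, Finset.sum_const]
  -- count the fiber
  have hcard : ((Finset.univ.filter (fun τ : Fin k → Fin n => Function.Injective τ)).filter
      (fun τ => Finset.image τ univ = S)).card = k.factorial := by
    have hSk : Fintype.card {x // x ∈ S} = k := by simp [Fintype.card_coe, hScard]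
    have himg : (Finset.univ.filter (fun τ : Fin k → Fin n => Function.Injective τ)).filter
        (fun τ => Finset.image τ univ = S)
        = Finset.image (fun e : Fin k ≃ {x // x ∈ S} =>
            (Subtype.val ∘ e : Fin k → Fin n)) Finset.univ := by
      ext τ
      simp only [Finset.mem_filter, Finset.mem_image, Finset.mem_univ, true_and]
      constructor
      · rintro ⟨hinj, himgS⟩
        have hmem : ∀ a, τ a ∈ S := fun a =>
          himgS ▸ Finset.mem_image_of_mem τ (Finset.mem_univ a)
        have hbij : Function.Bijective
            (fun a : Fin k => (⟨τ a, hmem a⟩ : {x // x ∈ S})) := by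
          rw [Fintype.bijective_iff_injective_and_card]
          exact ⟨fun a b hab => hinj (congrArg Subtype.val hab), by simp [hSk]⟩
        exact ⟨Equiv.ofBijective _ hbij, rfl⟩
      · rintro ⟨e, rfl⟩
        refine ⟨Subtype.val_injective.comp e.injective, ?_⟩
        ext x
        simp only [Finset.mem_image, Finset.mem_univ, true_and, Function.comp_apply]
        constructor
        · rintro ⟨a, rfl⟩; exact (e a).2
        · intro hx; exact ⟨e.symm ⟨x, hx⟩, by simp⟩
    have hinjmap : Function.Injective
        (fun e : Fin k ≃ {x // x ∈ S} => (Subtype.val ∘ e : Fin k → Fin n)) := by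
      intro e e' hee'
      exact Equiv.coe_fn_injective (funext fun a => Subtype.ext (congrFun hee' a))
    rw [himg, Finset.card_image_of_injective _ hinjmap, Finset.card_univ,
      Fintype.card_equiv ((Fintype.equivFinOfCardEq hSk).symm), Fintype.card_fin]
  rw [hcard, nsmul_eq_mul]


private lemma vsum (r : ℝ) (k : ℕ) :
    Summable (fun t : ℕ => if k ≤ t then r ^ (t - k) / ((t - k).factorial : ℝ) else 0)
    ∧ ∑' t : ℕ, (if k ≤ t then r ^ (t - k) / ((t - k).factorial : ℝ) else 0) = Real.exp r := by
  set v : ℕ → ℝ := fun t => if k ≤ t then r ^ (t - k) / ((t - k).factorial : ℝ) else 0 with hv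
  have hi : Function.Injective (fun m : ℕ => m + k) := add_left_injective k
  have hcomp : (v ∘ fun m : ℕ => m + k) = fun m : ℕ => r ^ m / (m.factorial : ℝ) := by
    funext m
    simp [hv, Nat.le_add_left]
  have hvanish : ∀ x ∉ Set.range (fun m : ℕ => m + k), v x = 0 := by
    intro x hx
    have : ¬ k ≤ x := fun h => hx ⟨x - k, by simpa using Nat.sub_add_cancel h⟩
    simp [hv, this]
  have hsummable : Summable v := by
    rw [← Function.Injective.summable_iff hi hvanish, hcomp]
    exact Real.summable_pow_div_factorial r
  refine ⟨hsummable, ?_⟩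
  have hsupp : Function.support v ⊆ Set.range (fun m : ℕ => m + k) := by
    intro x hx
    by_contra h
    exact hx (hvanish x h)
  have := Function.Injective.tsum_eq hi hsupp
  rw [← this]
  have : (fun m : ℕ => v (m + k)) = fun m : ℕ => r ^ m / (m.factorial : ℝ) := hcomp
  calc ∑' (c : ℕ), v ((fun m => m + k) c) = ∑' m : ℕ, r ^ m / (m.factorial : ℝ) := by
        exact tsum_congr fun m => congrFun hcomp m
    _ = Real.exp r := by
        rw [Real.exp_eq_exp_ℝ, NormedSpace.exp_eq_tsum_div]


private lemma wsum_equiv {n : ℕ} (p : Fin n → ℝ) (A : Matrix (Fin n) (Fin n) ℝ)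
    {α β : Type*} [Fintype α] [DecidableEq α] [Fintype β] [DecidableEq β] (e : α ≃ β) :
    ∑ τ : α → Fin n, (∏ a, p (τ a)) * (A.submatrix τ τ).det
      = ∑ τ : β → Fin n, (∏ b, p (τ b)) * (A.submatrix τ τ).det := by
  refine Fintype.sum_equiv (e.arrowCongr (Equiv.refl (Fin n))) _ _ fun τ => ?_
  have hm : A.submatrix (⇑(e.arrowCongr (Equiv.refl (Fin n))) τ)
        (⇑(e.arrowCongr (Equiv.refl (Fin n))) τ)
      = (A.submatrix τ τ).submatrix e.symm e.symm := by
    ext a b; simp [Equiv.arrowCongr]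
  have hp : (∏ b, p ((e.arrowCongr (Equiv.refl (Fin n))) τ b)) = ∏ a, p (τ a) := by
    rw [← Equiv.prod_comp e.symm (fun a => p (τ a))]
    refine Finset.prod_congr rfl fun b _ => ?_
    simp [Equiv.arrowCongr]
  rw [hm, Matrix.det_submatrix_equiv_self, hp]


/-- (Normalization of the R-DPP.) For a psd `L`, a strictly positive
probability vector `p` and `r > 0`, with `Ã_{ij} = L_{ij} / (r √(p_i p_j))` and `Ã_σ` the
`t × t` matrix with entries `Ã_{σ_a σ_b}`,
`Σ_{t} (e^{-r} r^t / t!) Σ_{σ ∈ [n]^t} (Π_a p_{σ_a}) det (1 + Ã_σ) = det (1 + L)`,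
i.e. if `t ∼ Poisson(r)` and `σ₁, …, σ_t` are i.i.d. from `p` then
`E[det (1 + Ã_σ)] = det (1 + L)`. -/
theorem rdpp_normalization {n : ℕ} (L : Matrix (Fin n) (Fin n) ℝ) (hL : L.PosSemidef)
    (p : Fin n → ℝ) (hp : ∀ i, 0 < p i) (hp1 : ∑ i, p i = 1) (r : ℝ) (hr : 0 < r) :
    ∑' t : ℕ, Real.exp (-r) * r ^ t / (t.factorial : ℝ) *
      ∑ σ : Fin t → Fin n, (∏ a, p (σ a)) *
        (1 + Matrix.of fun a b : Fin t =>
          L (σ a) (σ b) / (r * Real.sqrt (p (σ a) * p (σ b)))).det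
    = (1 + L).det := by
  classical
  set AT : Matrix (Fin n) (Fin n) ℝ :=
    Matrix.of fun i j => L i j / (r * Real.sqrt (p i * p j)) with hAT
  have step1 : ∀ t : ℕ,
      (∑ σ : Fin t → Fin n, (∏ a, p (σ a)) *
        (1 + Matrix.of fun a b : Fin t =>
          L (σ a) (σ b) / (r * Real.sqrt (p (σ a) * p (σ b)))).det)
      = ∑ k ∈ Finset.range (t + 1), (t.choose k : ℝ) * (r⁻¹ ^ k * cfun L k) := by
    intro t
    have e1 : ∀ σ : Fin t → Fin n,
        (∏ a, p (σ a)) * (1 + Matrix.of fun a b : Fin t =>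
          L (σ a) (σ b) / (r * Real.sqrt (p (σ a) * p (σ b)))).det
        = ∑ s : Finset (Fin t), (∏ a, p (σ a)) *
            (AT.submatrix (fun x : {a // a ∈ s} => σ ↑x)
              (fun x : {a // a ∈ s} => σ ↑x)).det := by
      intro σ
      rw [show (Matrix.of fun a b : Fin t =>
          L (σ a) (σ b) / (r * Real.sqrt (p (σ a) * p (σ b)))) = AT.submatrix σ σ from rfl,
        det_one_add_expand, Finset.mul_sum]
      refine Finset.sum_congr rfl fun s _ => ?_
      rw [Matrix.submatrix_submatrix]
      rfl
    rw [Finset.sum_congr rfl fun σ _ => e1 σ, Finset.sum_comm]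
    have e2 : ∀ s : Finset (Fin t),
        (∑ σ : Fin t → Fin n, (∏ a, p (σ a)) *
          (AT.submatrix (fun x : {a // a ∈ s} => σ ↑x) (fun x : {a // a ∈ s} => σ ↑x)).det)
        = r⁻¹ ^ s.card * cfun L s.card := by
      intro s
      rw [sum_split p hp1 AT s, wsum_equiv p AT s.equivFin]
      have hterm : ∀ τ : Fin s.card → Fin n, (∏ a, p (τ a)) * (AT.submatrix τ τ).det
          = r⁻¹ ^ s.card * (L.submatrix τ τ).det := fun τ => key_term L p hp r hr τ
      rw [Finset.sum_congr rfl fun τ _ => hterm τ, ← Finset.mul_sum, cfun]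
    rw [Finset.sum_congr rfl fun s _ => e2 s]
    rw [← Finset.powerset_univ, Finset.sum_powerset_apply_card (fun k => r⁻¹ ^ k * cfun L k)]
    simp [Finset.card_univ, nsmul_eq_mul]
  set h : ℕ → ℕ → ℝ := fun k t => (cfun L k / (k.factorial : ℝ)) *
    (Real.exp (-r) * (if k ≤ t then r ^ (t - k) / ((t - k).factorial : ℝ) else 0)) with hh
  have step2 : ∀ t : ℕ, Real.exp (-r) * r ^ t / (t.factorial : ℝ) *
      (∑ k ∈ Finset.range (t + 1), (t.choose k : ℝ) * (r⁻¹ ^ k * cfun L k))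
      = ∑ k ∈ Finset.range (n + 1), h k t := by
    intro t
    rw [Finset.mul_sum]
    have hterm : ∀ k ∈ Finset.range (t + 1),
        Real.exp (-r) * r ^ t / (t.factorial : ℝ) *
          ((t.choose k : ℝ) * (r⁻¹ ^ k * cfun L k)) = h k t := by
      intro k hk
      rw [Finset.mem_range] at hk
      have hk' : k ≤ t := by omega
      rw [hh]
      simp only [if_pos hk']
      rw [Nat.cast_choose ℝ hk']
      have h2 : r ^ t = r ^ (t - k) * r ^ k := by rw [← pow_add, Nat.sub_add_cancel hk']
      have f1 : (t.factorial : ℝ) ≠ 0 := Nat.cast_ne_zero.mpr t.factorial_ne_zero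
      have f2 : (k.factorial : ℝ) ≠ 0 := Nat.cast_ne_zero.mpr k.factorial_ne_zero
      have f3 : ((t - k).factorial : ℝ) ≠ 0 := Nat.cast_ne_zero.mpr (t - k).factorial_ne_zero
      field_simp
      rw [h2]
      rw [one_div, inv_pow, mul_assoc (r ^ (t - k)), mul_inv_cancel₀ (pow_ne_zero _ hr.ne'), mul_one,
        mul_comm]
    rw [Finset.sum_congr rfl hterm]
    rcases le_or_gt t n with htn | htn
    · refine Finset.sum_subset (Finset.range_subset_range.mpr (by omega)) ?_
      intro k _ hk
      rw [Finset.mem_range, not_lt] at hk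
      rw [hh]
      simp [if_neg (by omega : ¬ k ≤ t)]
    · refine (Finset.sum_subset (Finset.range_subset_range.mpr (by omega)) ?_).symm
      intro k _ hk
      rw [Finset.mem_range, not_lt] at hk
      rw [hh]
      simp [cfun_eq_zero L (by omega : n < k)]
  calc ∑' t : ℕ, Real.exp (-r) * r ^ t / (t.factorial : ℝ) *
      ∑ σ : Fin t → Fin n, (∏ a, p (σ a)) *
        (1 + Matrix.of fun a b : Fin t =>
          L (σ a) (σ b) / (r * Real.sqrt (p (σ a) * p (σ b)))).det
      = ∑' t : ℕ, ∑ k ∈ Finset.range (n + 1), h k t := by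
        refine tsum_congr fun t => ?_
        rw [step1 t, step2 t]
    _ = ∑ k ∈ Finset.range (n + 1), ∑' t : ℕ, h k t := by
        refine Summable.tsum_finsetSum fun k _ => ?_
        exact (((vsum r k).1).mul_left (Real.exp (-r))).mul_left _
    _ = ∑ k ∈ Finset.range (n + 1), cfun L k / (k.factorial : ℝ) := by
        refine Finset.sum_congr rfl fun k _ => ?_
        rw [hh]
        rw [tsum_mul_left, tsum_mul_left, (vsum r k).2, ← Real.exp_add, neg_add_cancel,
          Real.exp_zero, mul_one]
    _ = ∑ k ∈ Finset.range (n + 1), ∑ S ∈ Finset.powersetCard k (Finset.univ : Finset (Fin n)),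
          (L.submatrix (Subtype.val : {x // x ∈ S} → Fin n) Subtype.val).det := by
        refine Finset.sum_congr rfl fun k _ => ?_
        rw [cfun_eq L k, mul_div_cancel_left₀ _ (Nat.cast_ne_zero.mpr k.factorial_ne_zero)]
    _ = (1 + L).det := by
        rw [det_one_add_expand L]
        have hmaps : ∀ S ∈ (Finset.univ : Finset (Finset (Fin n))),
            S.card ∈ Finset.range (n + 1) := by
          intro S _
          rw [Finset.mem_range]
          have := Finset.card_le_univ S
          simp only [Finset.card_univ, Fintype.card_fin] at this
          omega
        rw [← Finset.sum_fiberwise_of_maps_to hmaps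
          (fun S => (L.submatrix (Subtype.val : {x // x ∈ S} → Fin n) Subtype.val).det)]
        refine Finset.sum_congr rfl fun k _ => ?_
        rw [Finset.powersetCard_eq_filter, Finset.powerset_univ]
end

section
/- Let A and B be real symmetric positive semidefinite n×n matrices with A ⪯ B in the Loewner order. Then tr( A (I + A)⁻¹ ) ≤ tr( B (I + B)⁻¹ ). In particular, for any Nyström approximation L̂ of a psd matrix L one has tr(L̂(I + L̂)⁻¹) ≤ tr(L(I + L)⁻¹), i.e. the approximate effective dimension never exceeds the true one. -/
set_option maxHeartbeats 1000000

open Matrix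

section Aux

variable {n : ℕ}

/-- A psd real matrix with unit determinant is positive definite. -/
lemma posDef_of_posSemidef_isUnitDet {M : Matrix (Fin n) (Fin n) ℝ}
    (hM : M.PosSemidef) (hdet : IsUnit M.det) : M.PosDef := by
  refine PosDef.of_dotProduct_mulVec_pos hM.isHermitian fun x hx => ?_
  rcases lt_or_eq_of_le (hM.dotProduct_mulVec_nonneg x) with h | h
  · exact h
  · exfalso
    have h0 : star x ⬝ᵥ M *ᵥ x = 0 := h.symm
    have hMx : M *ᵥ x = 0 := (hM.dotProduct_mulVec_zero_iff x).mp h0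
    have : M⁻¹ *ᵥ (M *ᵥ x) = x := by
      rw [mulVec_mulVec, Matrix.nonsing_inv_mul _ hdet, one_mulVec]
    rw [hMx, mulVec_zero] at this
    exact hx this.symm

/-- Trace of a psd real matrix is nonnegative. -/
lemma trace_nonneg_of_posSemidef {M : Matrix (Fin n) (Fin n) ℝ}
    (hM : M.PosSemidef) : 0 ≤ M.trace := by
  have h : ∀ i, 0 ≤ M i i := by
    intro i
    have := hM.dotProduct_mulVec_nonneg (Pi.single i 1)
    simpa [dotProduct, mulVec, Pi.single_apply, Finset.sum_ite_eq, Finset.sum_ite_eq'] using this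
  exact Finset.sum_nonneg fun i _ => h i

/-- Inverse is antitone on positive definite matrices w.r.t. the Loewner order. -/
lemma inv_antitone_posDef {P Q : Matrix (Fin n) (Fin n) ℝ}
    (hP : P.PosDef) (hQ : Q.PosDef) (hPQ : (Q - P).PosSemidef) :
    (P⁻¹ - Q⁻¹).PosSemidef := by
  have hQinv : (Q⁻¹).PosDef := hQ.inv
  obtain ⟨T, hTpsd, hTT⟩ : ∃ T : Matrix (Fin n) (Fin n) ℝ, T.PosSemidef ∧ T * T = Q⁻¹ :=
    by open scoped MatrixOrder in exact ⟨CFC.sqrt Q⁻¹, Matrix.nonneg_iff_posSemidef.mp (CFC.sqrt_nonneg _),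
      CFC.sqrt_mul_sqrt_self _ (Matrix.nonneg_iff_posSemidef.mpr hQinv.posSemidef)⟩
  have hTherm : Tᴴ = T := hTpsd.isHermitian
  have hTdet : IsUnit T.det := by
    have : T.det * T.det = (Q⁻¹).det := by rw [← det_mul, hTT]
    have h2 : IsUnit ((Q⁻¹).det) := isUnit_iff_ne_zero.mpr (ne_of_gt hQinv.det_pos)
    rw [← this] at h2
    exact isUnit_of_mul_isUnit_left h2
  have hTunit : IsUnit T := T.isUnit_iff_isUnit_det.mpr hTdet
  have hTpd : T.PosDef := posDef_of_posSemidef_isUnitDet hTpsd hTdet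
  -- Q = T⁻¹ * T⁻¹
  have hQeq : Q = T⁻¹ * T⁻¹ := by
    have : Q⁻¹⁻¹ = (T * T)⁻¹ := by rw [hTT]
    rw [Matrix.nonsing_inv_nonsing_inv _ (isUnit_iff_ne_zero.mpr (ne_of_gt hQ.det_pos)),
      Matrix.mul_inv_rev] at this
    exact this
  have hTmulinv : T * T⁻¹ = 1 := Matrix.mul_nonsing_inv _ hTdet
  have hTinvmul : T⁻¹ * T = 1 := Matrix.nonsing_inv_mul _ hTdet
  -- X := T * P * T
  set X : Matrix (Fin n) (Fin n) ℝ := T * P * T with hXdef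
  have hXpsd : X.PosSemidef := by
    have := hP.posSemidef.mul_mul_conjTranspose_same T
    rwa [hTherm] at this
  have hXdet : IsUnit X.det := by
    rw [hXdef, det_mul, det_mul]
    exact (hTdet.mul (isUnit_iff_ne_zero.mpr (ne_of_gt hP.det_pos))).mul hTdet
  have hXpd : X.PosDef := posDef_of_posSemidef_isUnitDet hXpsd hXdet
  -- 1 - X = T * (Q - P) * T is psd
  have hTQT : T * Q * T = 1 := by
    rw [hQeq, ← Matrix.mul_assoc T T⁻¹ T⁻¹, hTmulinv, Matrix.one_mul, hTinvmul]
  have h1X : (1 - X).PosSemidef := by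
    have h := hPQ.mul_mul_conjTranspose_same T
    rw [hTherm] at h
    have : T * (Q - P) * T = 1 - X := by
      rw [Matrix.mul_sub, Matrix.sub_mul, hTQT, hXdef]
    rwa [this] at h
  -- X⁻¹ - 1 is psd : X⁻¹ - 1 = Y * Y + (1 - X) with Y = R⁻¹ - R, R = sqrt X
  obtain ⟨R, hRpsd, hRR⟩ : ∃ R : Matrix (Fin n) (Fin n) ℝ, R.PosSemidef ∧ R * R = X :=
    by open scoped MatrixOrder in exact ⟨CFC.sqrt X, Matrix.nonneg_iff_posSemidef.mp (CFC.sqrt_nonneg _),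
      CFC.sqrt_mul_sqrt_self _ (Matrix.nonneg_iff_posSemidef.mpr hXpsd)⟩
  have hRherm : Rᴴ = R := hRpsd.isHermitian
  have hRdet : IsUnit R.det := by
    have : R.det * R.det = X.det := by rw [← det_mul, hRR]
    have h2 := hXdet; rw [← this] at h2
    exact isUnit_of_mul_isUnit_left h2
  have hRmulinv : R * R⁻¹ = 1 := Matrix.mul_nonsing_inv _ hRdet
  have hRinvmul : R⁻¹ * R = 1 := Matrix.nonsing_inv_mul _ hRdet
  have hXinv : X⁻¹ = R⁻¹ * R⁻¹ := by rw [← hRR, Matrix.mul_inv_rev]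
  set Y : Matrix (Fin n) (Fin n) ℝ := R⁻¹ - R with hYdef
  have hYherm : Yᴴ = Y := by
    rw [hYdef, conjTranspose_sub, hRherm, conjTranspose_nonsing_inv, hRherm]
  have hYY : Y * Y = X⁻¹ - 1 - (1 - X) := by
    rw [hYdef, Matrix.sub_mul, Matrix.mul_sub, Matrix.mul_sub, hXinv, hRR,
      hRinvmul, hRmulinv]
    try abel
  have hYYpsd : (Y * Y).PosSemidef := by
    have := posSemidef_conjTranspose_mul_self Y
    rwa [hYherm] at this
  have hXinv1 : (X⁻¹ - 1).PosSemidef := by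
    have h := hYYpsd.add h1X
    rw [hYY] at h
    have : X⁻¹ - 1 - (1 - X) + (1 - X) = X⁻¹ - 1 := by abel
    rwa [this] at h
  -- P⁻¹ - Q⁻¹ = T * (X⁻¹ - 1) * T
  have hXinv2 : X⁻¹ = T⁻¹ * P⁻¹ * T⁻¹ := by
    rw [hXdef, Matrix.mul_inv_rev, Matrix.mul_inv_rev, Matrix.mul_assoc]
  have hfinal : T * (X⁻¹ - 1) * T = P⁻¹ - Q⁻¹ := by
    rw [Matrix.mul_sub, Matrix.sub_mul, hXinv2, Matrix.mul_one, hTT]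
    congr 1
    rw [← Matrix.mul_assoc, ← Matrix.mul_assoc, hTmulinv, Matrix.one_mul,
      Matrix.mul_assoc, hTinvmul, Matrix.mul_one]
  have h := hXinv1.mul_mul_conjTranspose_same T
  rw [hTherm, hfinal] at h
  exact h

end Aux

/-- If `A ⪯ B` are real symmetric psd matrices (Loewner order), then
`tr (A (1 + A)⁻¹) ≤ tr (B (1 + B)⁻¹)`: the effective dimension is monotone, so any
Nyström approximation `L̂ ⪯ L` has `tr (L̂ (1 + L̂)⁻¹) ≤ tr (L (1 + L)⁻¹)`. -/
theorem effective_dimension_monotone {n : ℕ} (A B : Matrix (Fin n) (Fin n) ℝ)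
    (hA : A.PosSemidef) (hB : B.PosSemidef) (hAB : (B - A).PosSemidef) :
    (A * (1 + A)⁻¹).trace ≤ (B * (1 + B)⁻¹).trace := by
  have hP : (1 + A).PosDef := Matrix.PosDef.one.add_posSemidef hA
  have hQ : (1 + B).PosDef := Matrix.PosDef.one.add_posSemidef hB
  have hPdet : IsUnit (1 + A).det := isUnit_iff_ne_zero.mpr (ne_of_gt hP.det_pos)
  have hQdet : IsUnit (1 + B).det := isUnit_iff_ne_zero.mpr (ne_of_gt hQ.det_pos)
  have keyA : A * (1 + A)⁻¹ = 1 - (1 + A)⁻¹ := by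
    have h1 : (1 : Matrix (Fin n) (Fin n) ℝ) + A - 1 = A := by abel
    nth_rewrite 1 [← h1]
    rw [Matrix.sub_mul, Matrix.mul_nonsing_inv _ hPdet, Matrix.one_mul]
  have keyB : B * (1 + B)⁻¹ = 1 - (1 + B)⁻¹ := by
    have h1 : (1 : Matrix (Fin n) (Fin n) ℝ) + B - 1 = B := by abel
    nth_rewrite 1 [← h1]
    rw [Matrix.sub_mul, Matrix.mul_nonsing_inv _ hQdet, Matrix.one_mul]
  rw [keyA, keyB, trace_sub, trace_sub]
  have hmono : ((1 + A)⁻¹ - (1 + B)⁻¹).PosSemidef := by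
    apply inv_antitone_posDef hP hQ
    have : (1 + B) - (1 + A) = B - A := by abel
    rwa [this]
  have := trace_nonneg_of_posSemidef hmono
  rw [trace_sub] at this
  linarith
end

section
/- Let L = B Bᵀ be a real psd n×n matrix, let k = tr(L(I + L)⁻¹) ≥ 1, and set ε = 1/(2k + 2). Let P be a real symmetric idempotent matrix such that (1 − ε)(BᵀB + I) ⪯ P BᵀB P + I ⪯ (1 + ε)(BᵀB + I) in the Loewner order, and set L̂ = B P Bᵀ. Then tr( L(I + L)⁻¹ L − L̂ (I + L)⁻¹ L̂ ) ≤ 1, i.e. L̂ satisfies the accuracy condition of the fast-acceptance theorem for DPP-VFX. -/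
open Matrix

section NystromAux

variable {m r : Type*} [Fintype m] [Fintype r] [DecidableEq m] [DecidableEq r]

set_option linter.unusedSectionVars false

lemma nystrom_trace_nonneg {A : Matrix m m ℝ} (hA : A.PosSemidef) : 0 ≤ A.trace := by
  rw [Matrix.trace]
  refine Finset.sum_nonneg fun i _ => ?_
  have h := hA.dotProduct_mulVec_nonneg (Pi.single i 1)
  simpa [Matrix.diag, single_dotProduct] using h

lemma nystrom_smul_psd {A : Matrix m m ℝ} (hA : A.PosSemidef) {c : ℝ} (hc : 0 ≤ c) :
    (c • A).PosSemidef := by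
  refine Matrix.PosSemidef.of_dotProduct_mulVec_nonneg ?_ ?_
  · have h := hA.1
    simp only [Matrix.IsHermitian] at h ⊢
    rw [Matrix.conjTranspose_smul, h]
    simp
  · intro x
    have h := hA.dotProduct_mulVec_nonneg x
    rw [Matrix.smul_mulVec, dotProduct_smul]
    exact mul_nonneg hc h

lemma nystrom_trace_mul_nonneg {A C : Matrix m m ℝ} (hA : A.PosSemidef) (hC : C.PosSemidef) :
    0 ≤ (C * A).trace := by
  have hS' : ∃ S : Matrix m m ℝ, C = star S * S := by
    open scoped MatrixOrder in exact CStarAlgebra.nonneg_iff_eq_star_mul_self.mp hC.nonneg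
  obtain ⟨S, hS⟩ := hS'
  rw [hS, Matrix.star_eq_conjTranspose, Matrix.mul_assoc, Matrix.trace_mul_comm]
  exact nystrom_trace_nonneg (hA.mul_mul_conjTranspose_same S)

lemma nystrom_trace_mul_le {A B C : Matrix m m ℝ} (hC : C.PosSemidef)
    (h : (B - A).PosSemidef) : (C * A).trace ≤ (C * B).trace := by
  have := nystrom_trace_mul_nonneg h hC
  rw [Matrix.mul_sub, Matrix.trace_sub] at this
  linarith

lemma nystrom_cs (u v : m → ℝ) : (u ⬝ᵥ v) ^ 2 ≤ (u ⬝ᵥ u) * (v ⬝ᵥ v) := by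
  simpa [dotProduct, pow_two] using
    Finset.sum_mul_sq_le_sq_mul_sq Finset.univ u v

lemma nystrom_swap (A : Matrix m r ℝ) (c : ℝ) (hc : 0 ≤ c)
    (h : (c • (1 : Matrix m m ℝ) - A * Aᵀ).PosSemidef) :
    ((c • (1 : Matrix r r ℝ)) - Aᵀ * A).PosSemidef := by
  refine Matrix.PosSemidef.of_dotProduct_mulVec_nonneg ?_ ?_
  · simp only [Matrix.IsHermitian, Matrix.conjTranspose_eq_transpose_of_trivial,
      Matrix.transpose_sub, Matrix.transpose_smul, Matrix.transpose_one,
      Matrix.transpose_mul, Matrix.transpose_transpose]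
  · intro x
    set w : m → ℝ := A *ᵥ x with hw
    have key : ∀ y : m → ℝ, (Aᵀ *ᵥ y) ⬝ᵥ (Aᵀ *ᵥ y) ≤ c * (y ⬝ᵥ y) := by
      intro y
      have h2 := h.dotProduct_mulVec_nonneg y
      simp only [Matrix.sub_mulVec, Matrix.smul_mulVec, Matrix.one_mulVec,
        dotProduct_sub, dotProduct_smul, star_trivial,
        ← Matrix.mulVec_mulVec, smul_eq_mul] at h2
      have h3 : y ⬝ᵥ A *ᵥ Aᵀ *ᵥ y = (Aᵀ *ᵥ y) ⬝ᵥ (Aᵀ *ᵥ y) := by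
        rw [Matrix.dotProduct_mulVec, ← Matrix.mulVec_transpose]
      linarith [h2, h3.symm.le]
    have ha : (0:ℝ) ≤ w ⬝ᵥ w := by
      simpa [star_trivial] using dotProduct_self_star_nonneg w
    have hb : (0:ℝ) ≤ x ⬝ᵥ x := by
      simpa [star_trivial] using dotProduct_self_star_nonneg x
    have hxw : x ⬝ᵥ (Aᵀ *ᵥ w) = w ⬝ᵥ w := by
      rw [Matrix.dotProduct_mulVec, ← Matrix.mulVec_transpose, Matrix.transpose_transpose, hw]
    have hcs : (x ⬝ᵥ (Aᵀ *ᵥ w)) ^ 2 ≤ (x ⬝ᵥ x) * ((Aᵀ *ᵥ w) ⬝ᵥ (Aᵀ *ᵥ w)) :=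
      nystrom_cs x (Aᵀ *ᵥ w)
    have hkey := key w
    have hmain : w ⬝ᵥ w ≤ c * (x ⬝ᵥ x) := by
      rw [hxw] at hcs
      rcases ha.eq_or_lt with h0 | h0
      · rw [← h0]; positivity
      · have h5 : (w ⬝ᵥ w) * (w ⬝ᵥ w) ≤ (c * (x ⬝ᵥ x)) * (w ⬝ᵥ w) := by
          calc (w ⬝ᵥ w) * (w ⬝ᵥ w) = (w ⬝ᵥ w) ^ 2 := (sq _).symm
          _ ≤ (x ⬝ᵥ x) * (Aᵀ *ᵥ w ⬝ᵥ Aᵀ *ᵥ w) := hcs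
          _ ≤ (x ⬝ᵥ x) * (c * (w ⬝ᵥ w)) := mul_le_mul_of_nonneg_left hkey hb
          _ = (c * (x ⬝ᵥ x)) * (w ⬝ᵥ w) := by ring
        exact le_of_mul_le_mul_right h5 h0
    simp only [Matrix.sub_mulVec, Matrix.smul_mulVec, Matrix.one_mulVec,
      dotProduct_sub, dotProduct_smul, star_trivial,
      ← Matrix.mulVec_mulVec, smul_eq_mul]
    have h4 : x ⬝ᵥ Aᵀ *ᵥ A *ᵥ x = w ⬝ᵥ w := by
      rw [Matrix.dotProduct_mulVec, ← Matrix.mulVec_transpose, Matrix.transpose_transpose, hw]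
    linarith [hmain, h4.le, h4.ge]

lemma nystrom_conj {r' : Type*} [Fintype r'] [DecidableEq r']
    (N P : Matrix r' r' ℝ) (ε : ℝ) (hPidem : P * P = P) :
    (1 - P) * ((P * N * P + 1) - (1 - ε) • (N + 1)) * (1 - P)
      = ε • (1 - P) - (1 - ε) • ((1 - P) * N * (1 - P)) := by
  have hPP : ∀ X : Matrix r' r' ℝ, X * P * P = X * P := fun X => by
    rw [Matrix.mul_assoc, hPidem]
  simp only [Matrix.mul_sub, Matrix.sub_mul, Matrix.mul_add, Matrix.add_mul,
    Matrix.mul_one, Matrix.one_mul, Matrix.mul_smul, Matrix.smul_mul,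
    smul_sub, smul_add, sub_smul, one_smul, ← Matrix.mul_assoc, hPidem, hPP]
  abel

end NystromAux

/-- Let `L = B Bᵀ` with effective dimension `k = tr (L (1 + L)⁻¹) ≥ 1`,
set `ε = 1/(2k+2)`, and let `P` be a symmetric idempotent matrix satisfying the spectral
sandwich `(1-ε)(BᵀB + 1) ⪯ P BᵀB P + 1 ⪯ (1+ε)(BᵀB + 1)` (Loewner order). Then
`L̂ = B P Bᵀ` satisfies the accuracy condition `tr (L (1+L)⁻¹ L - L̂ (1+L)⁻¹ L̂) ≤ 1`. -/
theorem nystrom_accuracy_condition {n r : ℕ} (B : Matrix (Fin n) (Fin r) ℝ)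
    (L : Matrix (Fin n) (Fin n) ℝ) (hL : L = B * Bᵀ)
    (k : ℝ) (hk : k = (L * (1 + L)⁻¹).trace) (hk1 : 1 ≤ k)
    (ε : ℝ) (hε : ε = 1 / (2 * k + 2))
    (P : Matrix (Fin r) (Fin r) ℝ) (hPsym : Pᵀ = P) (hPidem : P * P = P)
    (hlow : ((P * Bᵀ * B * P + 1) - (1 - ε) • (Bᵀ * B + 1)).PosSemidef)
    (hhigh : ((1 + ε) • (Bᵀ * B + 1) - (P * Bᵀ * B * P + 1)).PosSemidef)
    (Lhat : Matrix (Fin n) (Fin n) ℝ) (hLhat : Lhat = B * P * Bᵀ) :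
    (L * (1 + L)⁻¹ * L - Lhat * (1 + L)⁻¹ * Lhat).trace ≤ 1 := by
  -- scalar facts
  have h2k : (0:ℝ) < 2 * k + 2 := by linarith
  have hεpos : 0 < ε := by rw [hε]; positivity
  have hεlt : ε < 1 := by rw [hε, div_lt_one h2k]; linarith
  have h1ε : 0 < 1 - ε := by linarith
  set α : ℝ := ε / (1 - ε) with hα
  have hαpos : 0 < α := by positivity
  -- basic matrix facts
  have hBH : Bᴴ = Bᵀ := Matrix.conjTranspose_eq_transpose_of_trivial B
  have hLpsd : L.PosSemidef := by
    rw [hL, ← hBH]; exact Matrix.posSemidef_self_mul_conjTranspose B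
  have hLsym : Lᵀ = L := by rw [hL]; simp [Matrix.transpose_mul]
  have hMpsd : (Bᵀ * B).PosSemidef := by
    rw [← hBH]; exact Matrix.posSemidef_conjTranspose_mul_self B
  have h1L : (1 + L).PosDef := Matrix.PosDef.one.add_posSemidef hLpsd
  have h1M : (1 + Bᵀ * B).PosDef := Matrix.PosDef.one.add_posSemidef hMpsd
  have hUL : IsUnit (1 + L).det := (Matrix.isUnit_iff_isUnit_det _).1 h1L.isUnit
  have hUM : IsUnit (1 + Bᵀ * B).det := (Matrix.isUnit_iff_isUnit_det _).1 h1M.isUnit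
  set G := (1 + L)⁻¹ with hGdef
  set H := (1 + Bᵀ * B)⁻¹ with hHdef
  have hGL : (1 + L) * G = 1 := Matrix.mul_nonsing_inv _ hUL
  have hLG : G * (1 + L) = 1 := Matrix.nonsing_inv_mul _ hUL
  have hMH : (1 + Bᵀ * B) * H = 1 := Matrix.mul_nonsing_inv _ hUM
  have hGpsd : G.PosSemidef := h1L.inv.posSemidef
  have hHpsd : H.PosSemidef := h1M.inv.posSemidef
  have hGsym : Gᵀ = G := by
    rw [← Matrix.conjTranspose_eq_transpose_of_trivial]; exact hGpsd.1
  have hHsym : Hᵀ = H := by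
    rw [← Matrix.conjTranspose_eq_transpose_of_trivial]; exact hHpsd.1
  -- commutation G B = B H
  have e1 : (1 + L) * B = B * (1 + Bᵀ * B) := by
    rw [hL]
    simp [Matrix.add_mul, Matrix.mul_add, Matrix.mul_assoc]
  have commB : G * B = B * H := by
    have h2 : (1 + L) * (B * H) = B := by
      rw [← Matrix.mul_assoc, e1, Matrix.mul_assoc, hMH, Matrix.mul_one]
    calc G * B = G * ((1 + L) * (B * H)) := by rw [h2]
    _ = (G * (1 + L)) * (B * H) := by rw [Matrix.mul_assoc]
    _ = B * H := by rw [hLG, Matrix.one_mul]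
  have commBt : Bᵀ * G = H * Bᵀ := by
    have h3 := congrArg Matrix.transpose commB
    simpa [Matrix.transpose_mul, hGsym, hHsym] using h3
  -- L * G is psd
  have hLGeq : L * G = B * H * Bᵀ := by
    rw [hL, Matrix.mul_assoc, commBt, ← Matrix.mul_assoc]
  have hLGpsd : (L * G).PosSemidef := by
    rw [hLGeq, ← hBH]
    exact hHpsd.mul_mul_conjTranspose_same B
  -- Q facts
  set Q : Matrix (Fin r) (Fin r) ℝ := 1 - P with hQdef
  have hQsym : Qᵀ = Q := by
    rw [hQdef, Matrix.transpose_sub, Matrix.transpose_one, hPsym]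
  have hQP : Q * P = 0 := by
    rw [hQdef, Matrix.sub_mul, Matrix.one_mul, hPidem, sub_self]
  have hQidem : Q * Q = Q := by
    have h4 : Q * Q = Q - Q * P := by rw [hQdef]; noncomm_ring
    rw [h4, hQP, sub_zero]
  have hPpsd : P.PosSemidef := by
    have h4 : (Pᴴ * P).PosSemidef := Matrix.posSemidef_conjTranspose_mul_self P
    rwa [Matrix.conjTranspose_eq_transpose_of_trivial, hPsym, hPidem] at h4
  have hQpsd : Q.PosSemidef := by
    have h4 : (Qᴴ * Q).PosSemidef := Matrix.posSemidef_conjTranspose_mul_self Q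
    rwa [Matrix.conjTranspose_eq_transpose_of_trivial, hQsym, hQidem] at h4
  -- conjugated sandwich
  have hQEQ : (Qᴴ * ((P * Bᵀ * B * P + 1) - (1 - ε) • (Bᵀ * B + 1)) * Q).PosSemidef :=
    hlow.conjTranspose_mul_mul_same Q
  rw [Matrix.conjTranspose_eq_transpose_of_trivial, hQsym] at hQEQ
  have heq := nystrom_conj (Bᵀ * B) P ε hPidem
  rw [← hQdef] at heq
  have hassoc : P * Bᵀ * B * P = P * (Bᵀ * B) * P := by
    rw [Matrix.mul_assoc P Bᵀ B]
  rw [hassoc, heq] at hQEQ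
  -- key bound in r-space : α • 1 - Q (BᵀB) Q psd
  have hαkey : (α • (1 : Matrix (Fin r) (Fin r) ℝ) - Q * (Bᵀ * B) * Q).PosSemidef := by
    have hsum : ((ε • Q - (1 - ε) • (Q * (Bᵀ * B) * Q)) + ε • P).PosSemidef :=
      hQEQ.add (nystrom_smul_psd hPpsd hεpos.le)
    have hscaled := nystrom_smul_psd hsum (by positivity : (0:ℝ) ≤ 1 / (1 - ε))
    have hrw : (1 / (1 - ε)) • ((ε • Q - (1 - ε) • (Q * (Bᵀ * B) * Q)) + ε • P)
        = α • (1 : Matrix (Fin r) (Fin r) ℝ) - Q * (Bᵀ * B) * Q := by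
      have hQP1 : Q + P = (1 : Matrix (Fin r) (Fin r) ℝ) := by
        rw [hQdef]; abel
      rw [← hQP1, hα]
      match_scalars <;> field_simp
    rwa [hrw] at hscaled
  -- swap to n-space : α • 1 - B Q Bᵀ psd
  set D : Matrix (Fin n) (Fin n) ℝ := B * Q * Bᵀ with hDdef
  have hDle : (α • (1 : Matrix (Fin n) (Fin n) ℝ) - D).PosSemidef := by
    have hAAt : (Q * Bᵀ) * (Q * Bᵀ)ᵀ = Q * (Bᵀ * B) * Q := by
      rw [Matrix.transpose_mul, Matrix.transpose_transpose, hQsym]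
      rw [Matrix.mul_assoc, Matrix.mul_assoc, Matrix.mul_assoc, ← Matrix.mul_assoc Bᵀ B Q]
    have hAtA : (Q * Bᵀ)ᵀ * (Q * Bᵀ) = D := by
      rw [Matrix.transpose_mul, Matrix.transpose_transpose, hQsym, hDdef]
      rw [Matrix.mul_assoc, ← Matrix.mul_assoc Q Q Bᵀ, hQidem, ← Matrix.mul_assoc]
    have hsw := nystrom_swap (Q * Bᵀ) α hαpos.le (by rw [hAAt]; exact hαkey)
    rwa [hAtA] at hsw
  -- D facts
  have hDsym : Dᵀ = D := by
    rw [hDdef, Matrix.transpose_mul, Matrix.transpose_mul, Matrix.transpose_transpose,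
      hQsym, Matrix.mul_assoc]
  have hLhatD : Lhat = L - D := by
    rw [hLhat, hL, hDdef, hQdef, Matrix.mul_sub, Matrix.mul_one, Matrix.sub_mul]
    abel
  -- main identity
  have hident : L * G * L - Lhat * G * Lhat = D * G * L + L * G * D - D * G * D := by
    rw [hLhatD]
    noncomm_ring
  -- traces
  have hGLcomm : G * L = L * G := by
    have e2 : (1 + L) * L = L * (1 + L) := by noncomm_ring
    calc G * L = G * L * ((1 + L) * G) := by rw [hGL, Matrix.mul_one]
    _ = G * (L * (1 + L)) * G := by rw [Matrix.mul_assoc, Matrix.mul_assoc, Matrix.mul_assoc]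
    _ = G * ((1 + L) * L) * G := by rw [← e2]
    _ = (G * (1 + L)) * (L * G) := by
        rw [Matrix.mul_assoc, Matrix.mul_assoc, Matrix.mul_assoc]
    _ = L * G := by rw [hLG, Matrix.one_mul]
  have t1 : (L * G * D).trace = (D * G * L).trace := by
    have h5 : (D * G * L)ᵀ = L * G * D := by
      rw [Matrix.transpose_mul, Matrix.transpose_mul, hGsym, hDsym, hLsym, Matrix.mul_assoc]
    rw [← h5, Matrix.trace_transpose]
  have t2 : 0 ≤ (D * G * D).trace := by
    have h6 : (Dᴴ * G * D).PosSemidef := hGpsd.conjTranspose_mul_mul_same D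
    rw [Matrix.conjTranspose_eq_transpose_of_trivial, hDsym] at h6
    exact nystrom_trace_nonneg h6
  have t3 : (D * G * L).trace = ((L * G) * D).trace := by
    rw [Matrix.mul_assoc, Matrix.trace_mul_comm, hGLcomm]
  have t4 : ((L * G) * D).trace ≤ ((L * G) * (α • (1 : Matrix (Fin n) (Fin n) ℝ))).trace :=
    nystrom_trace_mul_le hLGpsd hDle
  have t5 : ((L * G) * (α • (1 : Matrix (Fin n) (Fin n) ℝ))).trace = α * k := by
    rw [Matrix.mul_smul, Matrix.mul_one, Matrix.trace_smul, hk, smul_eq_mul]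
  -- final arithmetic
  have he2 : ε * (2 * k + 2) = 1 := by rw [hε]; field_simp
  have harith : 2 * (α * k) ≤ 1 := by
    have h7 : 2 * (α * k) = (2 * ε * k) / (1 - ε) := by rw [hα]; ring
    rw [h7, div_le_one h1ε]
    nlinarith [he2, hεpos, hk1]
  calc (L * G * L - Lhat * G * Lhat).trace
      = (D * G * L).trace + (L * G * D).trace - (D * G * D).trace := by
        rw [hident, Matrix.trace_sub, Matrix.trace_add]
  _ ≤ 2 * (α * k) := by
      rw [t1, t3]
      have := t4.trans_eq t5
      linarith
  _ ≤ 1 := harith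
end

section
/- Let L be a real positive semidefinite n×n matrix. Then Σ_{S ⊆ {1,…,n}} |S| · det(L_S) = det(I + L) · tr( L (I + L)⁻¹ ), where L_S is the principal submatrix of L indexed by S. Consequently, if S ∼ DPP(L) then the expected subset size E[|S|] equals the 1-effective dimension d_eff(1) = tr(L(I + L)⁻¹). -/
open Matrix

section Aux
variable {n : ℕ}

private lemma submatrix_piecewise_eq (S : Finset (Fin n)) (L : Matrix (Fin n) (Fin n) ℝ) :
    Matrix.submatrix (S.piecewise L ((1 : Matrix (Fin n) (Fin n) ℝ) : Fin n → Fin n → ℝ))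
        (Equiv.sumCompl (· ∈ S)) (Equiv.sumCompl (· ∈ S)) =
      Matrix.fromBlocks (L.submatrix Subtype.val Subtype.val)
        (L.submatrix Subtype.val Subtype.val) 0 (1 : Matrix {x // x ∉ S} {x // x ∉ S} ℝ) := by
  ext i j
  simp only [Matrix.submatrix, Matrix.of_apply, Finset.piecewise]
  cases i with
  | inl a =>
    cases j with
    | inl b => simp [Finset.piecewise_eq_of_mem _ _ _ a.2]
    | inr b => simp [Finset.piecewise_eq_of_mem _ _ _ a.2]
  | inr a =>
    cases j with
    | inl b =>
      have hab : (a : Fin n) ≠ (b : Fin n) := fun h => a.2 (h ▸ b.2)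
      simp only [Matrix.submatrix_apply, Equiv.sumCompl_apply_inr, Equiv.sumCompl_apply_inl,
        Finset.piecewise_eq_of_notMem _ _ _ a.2, Matrix.fromBlocks_apply₂₁]
      simp [a.2, Matrix.one_apply, hab]
    | inr b =>
      simp only [Matrix.submatrix_apply, Equiv.sumCompl_apply_inr,
        Finset.piecewise_eq_of_notMem _ _ _ a.2, Matrix.fromBlocks_apply₂₂]
      simp [a.2, Matrix.one_apply, Subtype.val_inj]

private lemma det_piecewise (S : Finset (Fin n)) (L : Matrix (Fin n) (Fin n) ℝ) :
    Matrix.det (S.piecewise L ((1 : Matrix (Fin n) (Fin n) ℝ) : Fin n → Fin n → ℝ)) =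
      (L.submatrix (Subtype.val : {x // x ∈ S} → Fin n) Subtype.val).det := by
  classical
  calc Matrix.det (S.piecewise L ((1 : Matrix (Fin n) (Fin n) ℝ) : Fin n → Fin n → ℝ))
      = Matrix.det (Matrix.submatrix
          (S.piecewise L ((1 : Matrix (Fin n) (Fin n) ℝ) : Fin n → Fin n → ℝ))
          (Equiv.sumCompl (· ∈ S)) (Equiv.sumCompl (· ∈ S))) :=
        (Matrix.det_submatrix_equiv_self _ _).symm
    _ = _ := by
        rw [submatrix_piecewise_eq, Matrix.det_fromBlocks_zero₂₁, Matrix.det_one, mul_one]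

private lemma det_one_add_eq_sum (L : Matrix (Fin n) (Fin n) ℝ) :
    (1 + L).det = ∑ S : Finset (Fin n),
      (L.submatrix (Subtype.val : {x // x ∈ S} → Fin n) Subtype.val).det := by
  classical
  have h : (1 + L).det = Matrix.detRowAlternating (L + (1 : Matrix (Fin n) (Fin n) ℝ)) := by
    rw [add_comm]; rfl
  rw [h]
  have h2 : Matrix.detRowAlternating (L + (1 : Matrix (Fin n) (Fin n) ℝ)) =
      ∑ s : Finset (Fin n),
        Matrix.detRowAlternating (s.piecewise L ((1 : Matrix (Fin n) (Fin n) ℝ) :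
          Fin n → Fin n → ℝ)) :=
    (Matrix.detRowAlternating (R := ℝ) (n := Fin n)).toMultilinearMap.map_add_univ
      (L : Fin n → Fin n → ℝ) (1 : Matrix (Fin n) (Fin n) ℝ)
  rw [h2]
  refine Finset.sum_congr rfl fun S _ => ?_
  exact det_piecewise S L

private lemma adjugate_one_add_diag (L : Matrix (Fin n) (Fin n) ℝ) (i : Fin n) :
    (Matrix.adjugate (1 + L)) i i =
      ∑ S : Finset (Fin n),
        if i ∈ S then 0
        else (L.submatrix (Subtype.val : {x // x ∈ S} → Fin n) Subtype.val).det := by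
  classical
  rw [Matrix.adjugate_apply]
  have hrow : (1 + L).updateRow i (Pi.single i 1) = 1 + L.updateRow i 0 := by
    ext j k
    by_cases hj : j = i
    · subst hj
      simp [Matrix.updateRow_self, Matrix.one_apply, Pi.single_apply, eq_comm]
    · simp [Matrix.updateRow_ne hj]
  rw [hrow, det_one_add_eq_sum]
  refine Finset.sum_congr rfl fun S _ => ?_
  by_cases hi : i ∈ S
  · rw [if_pos hi]
    apply Matrix.det_eq_zero_of_row_eq_zero (⟨i, hi⟩ : {x // x ∈ S})
    intro j
    simp [Matrix.updateRow_self]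
  · rw [if_neg hi]
    congr 1
    ext a b
    have : (a : Fin n) ≠ i := fun h => hi (h ▸ a.2)
    simp [Matrix.updateRow_ne this]

end Aux

/-- For a psd `n × n` matrix `L`,
`Σ_{S ⊆ [n]} |S| det (L_S) = det (1 + L) * tr (L (1 + L)⁻¹)`; consequently the expected
subset size of `DPP(L)` equals the 1-effective dimension `d_eff(1) = tr (L (1 + L)⁻¹)`. -/
theorem dpp_expected_size_eq_deff {n : ℕ} (L : Matrix (Fin n) (Fin n) ℝ)
    (hL : L.PosSemidef) :
    ∑ S : Finset (Fin n),
        (S.card : ℝ) * (L.submatrix (Subtype.val : {x // x ∈ S} → Fin n) Subtype.val).det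
      = (1 + L).det * (L * (1 + L)⁻¹).trace := by
  classical
  have hpd : (1 + L).PosDef := Matrix.PosDef.add_posSemidef Matrix.PosDef.one hL
  have hunit : IsUnit (1 + L).det := hpd.det_pos.ne'.isUnit
  -- L * (1+L)⁻¹ = 1 - (1+L)⁻¹
  have hLinv : L * (1 + L)⁻¹ = 1 - (1 + L)⁻¹ := by
    calc L * (1 + L)⁻¹ = ((1 + L) - 1) * (1 + L)⁻¹ := by rw [add_sub_cancel_left]
      _ = (1 + L) * (1 + L)⁻¹ - 1 * (1 + L)⁻¹ := by rw [Matrix.sub_mul]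
      _ = 1 - (1 + L)⁻¹ := by rw [Matrix.mul_nonsing_inv _ hunit, Matrix.one_mul]
  have hadj : (1 + L).det • (1 + L)⁻¹ = Matrix.adjugate (1 + L) := by
    rw [Matrix.inv_def, smul_smul, Ring.mul_inverse_cancel _ hunit, one_smul]
  -- rewrite RHS
  have hRHS : (1 + L).det * (L * (1 + L)⁻¹).trace
      = (n : ℝ) * (1 + L).det - (Matrix.adjugate (1 + L)).trace := by
    rw [hLinv, Matrix.trace_sub, Matrix.trace_one, ← hadj, Matrix.trace_smul, smul_eq_mul]
    simp only [Fintype.card_fin]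
    ring
  rw [hRHS]
  -- rewrite LHS
  have hcard : ∀ S : Finset (Fin n), (S.card : ℝ) = ∑ i : Fin n, if i ∈ S then 1 else 0 := by
    intro S; simp
  have key : ∀ i : Fin n,
      (∑ S : Finset (Fin n),
        if i ∈ S then (L.submatrix (Subtype.val : {x // x ∈ S} → Fin n) Subtype.val).det
        else 0)
      = (1 + L).det - Matrix.adjugate (1 + L) i i := by
    intro i
    rw [det_one_add_eq_sum, adjugate_one_add_diag, ← Finset.sum_sub_distrib]
    refine Finset.sum_congr rfl fun S _ => ?_
    by_cases hi : i ∈ S <;> simp [hi]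
  calc ∑ S : Finset (Fin n),
        (S.card : ℝ) * (L.submatrix (Subtype.val : {x // x ∈ S} → Fin n) Subtype.val).det
      = ∑ S : Finset (Fin n), ∑ i : Fin n,
          (if i ∈ S then (L.submatrix (Subtype.val : {x // x ∈ S} → Fin n) Subtype.val).det
           else 0) := by
        refine Finset.sum_congr rfl fun S _ => ?_
        rw [hcard S, Finset.sum_mul]
        refine Finset.sum_congr rfl fun i _ => ?_
        by_cases hi : i ∈ S <;> simp [hi]
    _ = ∑ i : Fin n, ∑ S : Finset (Fin n),
          (if i ∈ S then (L.submatrix (Subtype.val : {x // x ∈ S} → Fin n) Subtype.val).det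
           else 0) := Finset.sum_comm
    _ = ∑ i : Fin n, ((1 + L).det - Matrix.adjugate (1 + L) i i) :=
        Finset.sum_congr rfl fun i _ => key i
    _ = (n : ℝ) * (1 + L).det - (Matrix.adjugate (1 + L)).trace := by
        rw [Finset.sum_sub_distrib, Finset.sum_const, Finset.card_univ, Fintype.card_fin,
          nsmul_eq_mul]
        rfl
end

section
/- Let λ₁,…,λ_n be strictly positive real numbers and let k ∈ {0,1,…,n}. Then there exists α > 0 such that α^k e_k(λ) ≥ α^i e_i(λ) for all i ∈ {0,1,…,n}, where e_i denotes the i-th elementary symmetric polynomial (with e_0 = 1). In other words, for every target size k there is a rescaling α of the kernel L (with eigenvalues λ₁,…,λ_n) making k a mode of the subset-size distribution of DPP(αL), whose probabilities satisfy Pr(|S_α| = i) ∝ α^i e_i(λ). -/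
open Finset

/-- Recursive elementary symmetric function on lists of reals. -/
def esl : List ℝ → ℕ → ℝ
  | _, 0 => 1
  | [], _ + 1 => 0
  | a :: l, i + 1 => esl l (i + 1) + a * esl l i

lemma esl_zero (l : List ℝ) : esl l 0 = 1 := by cases l <;> rfl

lemma esl_nil (i : ℕ) : esl [] (i + 1) = 0 := rfl

lemma esl_cons (a : ℝ) (l : List ℝ) (i : ℕ) :
    esl (a :: l) (i + 1) = esl l (i + 1) + a * esl l i := rfl

lemma esl_nonneg (l : List ℝ) (h : ∀ x ∈ l, 0 ≤ x) : ∀ i, 0 ≤ esl l i := by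
  induction l with
  | nil =>
    intro i
    cases i with
    | zero => simp [esl_zero]
    | succ i => simp [esl_nil]
  | cons a l ih =>
    intro i
    have h' : ∀ x ∈ l, 0 ≤ x := fun x hx => h x (List.mem_cons_of_mem _ hx)
    have ha : 0 ≤ a := h a (List.mem_cons_self)
    cases i with
    | zero => simp [esl_zero]
    | succ i =>
      rw [esl_cons]
      have h1 := ih h' (i + 1)
      have h2 := ih h' i
      nlinarith

lemma esl_pos (l : List ℝ) (h : ∀ x ∈ l, 0 < x) : ∀ i ≤ l.length, 0 < esl l i := by
  induction l with
  | nil =>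
    intro i hi
    have : i = 0 := by simpa using hi
    subst this
    simp [esl_zero]
  | cons a l ih =>
    intro i hi
    have h' : ∀ x ∈ l, 0 < x := fun x hx => h x (List.mem_cons_of_mem _ hx)
    have ha : 0 < a := h a (List.mem_cons_self)
    cases i with
    | zero => simp [esl_zero]
    | succ i =>
      rw [esl_cons]
      have hi' : i ≤ l.length := by simpa using Nat.succ_le_succ_iff.mp (by simpa using hi)
      have h1 : 0 ≤ esl l (i + 1) := esl_nonneg l (fun x hx => (h' x hx).le) _
      have h2 : 0 < a * esl l i := mul_pos ha (ih h' i hi')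
      linarith

/-- The key log-concavity (Newton-type) inequality: `e_i e_{j+1} ≤ e_{i+1} e_j` for `i ≤ j`. -/
lemma esl_shift (l : List ℝ) (h : ∀ x ∈ l, 0 ≤ x) :
    ∀ i j, i ≤ j → esl l i * esl l (j + 1) ≤ esl l (i + 1) * esl l j := by
  induction l with
  | nil =>
    intro i j hij
    cases i with
    | zero => simp [esl_zero, esl_nil]
    | succ i => simp [esl_nil]
  | cons a l ih =>
    intro i j hij
    have h' : ∀ x ∈ l, 0 ≤ x := fun x hx => h x (List.mem_cons_of_mem _ hx)
    have ha : 0 ≤ a := h a (List.mem_cons_self)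
    have hnn : ∀ m, 0 ≤ esl l m := esl_nonneg l h'
    cases i with
    | zero =>
      cases j with
      | zero => rw [mul_comm]
      | succ j =>
        rw [esl_zero, esl_cons, esl_cons, esl_cons, esl_zero]
        have k1 := ih h' 0 (j + 1) (Nat.zero_le _)
        rw [esl_zero, one_mul] at k1
        nlinarith [hnn j, hnn (j + 1), hnn 1, mul_nonneg ha (hnn j)]
    | succ i =>
      cases j with
      | zero => omega
      | succ j =>
        have hij' : i ≤ j := by omega
        rw [esl_cons, esl_cons, esl_cons, esl_cons]
        have c1 := ih h' (i + 1) (j + 1) (by omega)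
        have c2 := ih h' i j hij'
        have c3 : esl l i * esl l (j + 1 + 1) ≤ esl l (i + 1 + 1) * esl l j := by
          rcases Nat.eq_or_lt_of_le hij' with rfl | hlt
          · nlinarith [ih h' i (i + 1) (by omega)]
          · calc esl l i * esl l (j + 1 + 1) ≤ esl l (i + 1) * esl l (j + 1) :=
                  ih h' i (j + 1) (by omega)
              _ ≤ esl l (i + 1 + 1) * esl l j := ih h' (i + 1) j (by omega)
        nlinarith [mul_le_mul_of_nonneg_left c3 ha, mul_le_mul_of_nonneg_left c2
          (mul_nonneg ha ha), c1]

lemma esymm_cons (a : ℝ) (s : Multiset ℝ) (i : ℕ) :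
    (a ::ₘ s).esymm (i + 1) = s.esymm (i + 1) + a * s.esymm i := by
  simp only [Multiset.esymm, Multiset.powersetCard_cons, Multiset.map_add, Multiset.sum_add,
    Multiset.map_map, Function.comp_def, Multiset.prod_cons]
  rw [Multiset.sum_map_mul_left]

lemma esl_eq_esymm (l : List ℝ) : ∀ i, esl l i = (↑l : Multiset ℝ).esymm i := by
  induction l with
  | nil =>
    intro i
    cases i with
    | zero => simp [esl_zero, Multiset.esymm]
    | succ i =>
      rw [esl_nil]
      show (0 : ℝ) = (0 : Multiset ℝ).esymm (i + 1)
      simp [Multiset.esymm, Multiset.powersetCard_zero_right]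
  | cons a l ih =>
    intro i
    cases i with
    | zero => simp [esl_zero, Multiset.esymm]
    | succ i =>
      have : ((a :: l : List ℝ) : Multiset ℝ) = a ::ₘ (↑l : Multiset ℝ) := rfl
      rw [esl_cons, this, esymm_cons, ih, ih]

lemma chain_up (f : ℕ → ℝ) : ∀ k, (∀ i < k, f i ≤ f (i + 1)) → ∀ i ≤ k, f i ≤ f k := by
  intro k
  induction k with
  | zero =>
    intro _ i hi
    rw [Nat.le_zero.mp hi]
  | succ k ih =>
    intro h i hi
    rcases Nat.eq_or_lt_of_le hi with rfl | hi'
    · exact le_rfl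
    · exact le_trans (ih (fun j hj => h j (by omega)) i (by omega)) (h k (by omega))

lemma chain_down (f : ℕ → ℝ) (k n : ℕ) (h : ∀ i, k ≤ i → i < n → f (i + 1) ≤ f i) :
    ∀ i, k ≤ i → i ≤ n → f i ≤ f k := by
  intro i hki
  induction i, hki using Nat.le_induction with
  | base => exact fun _ => le_rfl
  | succ i hki ih => exact fun hin => le_trans (h i hki (by omega)) (ih (by omega))

/-- For strictly positive reals `λ₁, …, λ_n` and any `k ∈ {0, …, n}`
there is a rescaling `α > 0` such that `α^k e_k(λ) ≥ α^i e_i(λ)` for all `i ∈ {0, …, n}`,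
where `e_i` is the `i`-th elementary symmetric polynomial: every target size `k` can be
made a mode of the subset-size distribution of `DPP(αL)`. -/
theorem exists_rescaling_mode {n : ℕ} (lam : Fin n → ℝ) (hlam : ∀ j, 0 < lam j)
    (k : ℕ) (hk : k ≤ n) :
    ∃ α : ℝ, 0 < α ∧ ∀ i ≤ n,
      α ^ i * ∑ S ∈ Finset.univ.powersetCard i, ∏ j ∈ S, lam j
        ≤ α ^ k * ∑ S ∈ Finset.univ.powersetCard k, ∏ j ∈ S, lam j := by
  classical
  set l : List ℝ := (Finset.univ.val.map lam).toList with hl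
  have hmem : ∀ x ∈ l, 0 < x := by
    intro x hx
    rw [hl, Multiset.mem_toList, Multiset.mem_map] at hx
    obtain ⟨j, -, rfl⟩ := hx
    exact hlam j
  have hmem' : ∀ x ∈ l, 0 ≤ x := fun x hx => (hmem x hx).le
  have hlen : l.length = n := by
    rw [hl, Multiset.length_toList]
    simp
  set E : ℕ → ℝ := fun i => esl l i with hEdef
  have hE : ∀ i, (∑ S ∈ Finset.univ.powersetCard i, ∏ j ∈ S, lam j) = E i := by
    intro i
    rw [← Finset.esymm_map_val, ← Multiset.coe_toList (Finset.univ.val.map lam),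
      ← esl_eq_esymm]
  have hpos : ∀ i ≤ n, 0 < E i := fun i hi => esl_pos l hmem i (by omega)
  have hnn : ∀ i, 0 ≤ E i := esl_nonneg l hmem'
  have hshift : ∀ i j, i ≤ j → E i * E (j + 1) ≤ E (i + 1) * E j := esl_shift l hmem'
  obtain ⟨α, hα, h1, h2⟩ :
      ∃ α : ℝ, 0 < α ∧ (∀ i < k, E i ≤ α * E (i + 1)) ∧
        (∀ i, k ≤ i → i < n → α * E (i + 1) ≤ E i) := by
    by_cases hk0 : k = 0
    · subst hk0
      have h10 : (0:ℝ) < 1 + E 1 := by linarith [hnn 1]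
      refine ⟨1 / (1 + E 1), by positivity, fun i hi => by omega, fun i _ hin => ?_⟩
      have hs := hshift 0 i (Nat.zero_le _)
      rw [show E 0 = 1 from esl_zero l, one_mul] at hs
      have hEi : 0 < E i := hpos i (by omega)
      rw [div_mul_eq_mul_div, one_mul, div_le_iff₀ h10]
      nlinarith
    · have hk1 : k - 1 + 1 = k := by omega
      have hEk : 0 < E k := hpos k hk
      refine ⟨E (k - 1) / E k, div_pos (hpos (k - 1) (by omega)) hEk, fun i hi => ?_,
        fun i hki hin => ?_⟩
      · have hs := hshift i (k - 1) (by omega)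
        rw [hk1] at hs
        rw [div_mul_eq_mul_div, le_div_iff₀ hEk]
        nlinarith
      · have hs := hshift (k - 1) i (by omega)
        rw [hk1] at hs
        rw [div_mul_eq_mul_div, div_le_iff₀ hEk]
        nlinarith
  refine ⟨α, hα, fun i hi => ?_⟩
  rw [hE i, hE k]
  set f : ℕ → ℝ := fun i => α ^ i * E i with hf
  have step_up : ∀ i < k, f i ≤ f (i + 1) := by
    intro i hik
    have := mul_le_mul_of_nonneg_left (h1 i hik) (pow_nonneg hα.le i)
    calc f i = α ^ i * E i := rfl
      _ ≤ α ^ i * (α * E (i + 1)) := this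
      _ = α ^ (i + 1) * E (i + 1) := by ring
  have step_down : ∀ i, k ≤ i → i < n → f (i + 1) ≤ f i := by
    intro i hki hin
    have := mul_le_mul_of_nonneg_left (h2 i hki hin) (pow_nonneg hα.le i)
    calc f (i + 1) = α ^ (i + 1) * E (i + 1) := rfl
      _ = α ^ i * (α * E (i + 1)) := by ring
      _ ≤ α ^ i * E i := this
      _ = f i := rfl
  show f i ≤ f k
  rcases le_total i k with h | h
  · exact chain_up f k step_up i h
  · exact chain_down f k n step_down i h hi
end
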